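/- arXiv:2508.04081 — 3 statements merged into one kernel-verified Lean document; each statement's English description precedes it below -/
import Mathlib

section
/- Tutte's theorem: Let G = (V, E) be a finite simple undirected graph and let T(G) be its Tutte matrix over the multivariate polynomial ring F[X_E] for a field F. Then G has a perfect matching if and only if det T(G) is not the zero polynomial. -/
open scoped Classical

/-- The Tutte matrix of a simple graph `G` on a linearly ordered finite vertex set `V`,
over the multivariate polynomial ring `F[X_E]` (one indeterminate `x_e` for every
potential edge `e`; only the indeterminates of actual edges occur in the matrix):
entry `x_{{u,v}}` if `u ~ v` and `u < v`, entry `-x_{{u,v}}` if `u ~ v` and `u > v`,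
and `0` otherwise. -/
noncomputable def tutteMatrix (V F : Type) [Fintype V] [LinearOrder V] [Field F]
    (G : SimpleGraph V) : Matrix V V (MvPolynomial (Sym2 V) F) :=
  fun u v =>
    if G.Adj u v then
      (if u < v then MvPolynomial.X s(u, v) else - MvPolynomial.X s(u, v))
    else 0

namespace TutteAux

open MvPolynomial Equiv Finset Equiv.Perm

set_option linter.unusedSectionVars false

variable {V F : Type} [Fintype V] [LinearOrder V] [Field F] {G : SimpleGraph V}



lemma tm_not_adj {u v : V} (h : ¬ G.Adj u v) : tutteMatrix V F G u v = 0 := by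
  simp [tutteMatrix, h]

lemma tm_adj {u v : V} (h : G.Adj u v) :
    tutteMatrix V F G u v = C (if u < v then (1:F) else -1) * X s(u,v) := by
  simp only [tutteMatrix, if_pos h]
  split_ifs <;> simp

lemma tm_skew (u v : V) (h : u ≠ v) : tutteMatrix V F G u v = - tutteMatrix V F G v u := by
  by_cases ha : G.Adj u v
  · rw [tm_adj ha, tm_adj ha.symm, Sym2.eq_swap]
    rcases lt_or_gt_of_ne h with hlt | hgt
    · rw [if_pos hlt, if_neg (not_lt.2 hlt.le)]
      rw [map_neg, map_one]
      ring
    · rw [if_neg (not_lt.2 hgt.le), if_pos hgt]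
      rw [map_neg, map_one]
      ring
  · rw [tm_not_adj ha, tm_not_adj fun h' => ha h'.symm]
    ring

lemma prod_X_eq (s : Finset V) (f : V → Sym2 V) :
    (∏ v ∈ s, (X (f v) : MvPolynomial (Sym2 V) F)) =
      monomial (∑ v ∈ s, Finsupp.single (f v) 1) 1 := by
  induction s using Finset.cons_induction with
  | empty => simp [monomial_zero']
  | cons a s ha ih =>
      rw [Finset.prod_cons, Finset.sum_cons, ih, X, monomial_mul, one_mul]

lemma prod_tm_eq (σ : Perm V) (hA : ∀ v, G.Adj (σ v) v) :
    (∏ v, tutteMatrix V F G (σ v) v) =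
      monomial (∑ v, Finsupp.single s(σ v, v) 1)
        (∏ v, (if σ v < v then (1:F) else -1)) := by
  calc (∏ v, tutteMatrix V F G (σ v) v)
      = ∏ v, (C (if σ v < v then (1:F) else -1) * X s(σ v, v)) := by
        refine Finset.prod_congr rfl fun v _ => tm_adj (hA v)
    _ = C (∏ v, (if σ v < v then (1:F) else -1)) * ∏ v, X s(σ v, v) := by
        rw [Finset.prod_mul_distrib, map_prod]
    _ = _ := by rw [prod_X_eq, C_mul_monomial, mul_one]

lemma pm_det_ne_zero (M : G.Subgraph) (hM : M.IsPerfectMatching) :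
    (tutteMatrix V F G).det ≠ 0 := by
  have huniq := SimpleGraph.Subgraph.isPerfectMatching_iff.mp hM
  choose m hm hm' using huniq
  have hinv : Function.Involutive m := fun v => (hm' (m v) v (hm v).symm).symm
  have hadjM : ∀ v, G.Adj v (m v) := fun v => M.adj_sub (hm v)
  set σM : Perm V := hinv.toPerm with hσM
  have hσMapp : ∀ v, σM v = m v := fun v => rfl
  set d : Sym2 V →₀ ℕ := ∑ v, Finsupp.single s(v, m v) 1 with hd
  -- Key1: exponent determines σ
  have key1 : ∀ σ : Perm V, (∀ v, G.Adj (σ v) v) →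
      (∑ v, Finsupp.single s(σ v, v) (1:ℕ)) = d → σ = σM := by
    intro σ hA hD
    ext v
    have h1 : d s(σ v, v) ≠ 0 := by
      rw [← hD]
      intro h0
      rw [Finsupp.finset_sum_apply] at h0
      have := (Finset.sum_eq_zero_iff.mp h0) v (mem_univ v)
      simp at this
    have h2 : ∃ w, s(w, m w) = s(σ v, v) := by
      by_contra hc
      push_neg at hc
      apply h1
      rw [hd, Finsupp.finset_sum_apply]
      exact Finset.sum_eq_zero fun w _ => by
        simp [Finsupp.single_apply, hc w]
    obtain ⟨w, hw⟩ := h2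
    have hv : v ∈ s(w, m w) := by rw [hw]; simp
    have he : s(v, m v) = s(σ v, v) := by
      rcases Sym2.mem_iff.mp hv with rfl | rfl
      · exact hw
      · rw [← hw, hinv w, Sym2.eq_swap]
    have hne : σ v ≠ v := (hA v).ne
    rcases Sym2.eq_iff.mp he with ⟨h3, h4⟩ | ⟨h3, h4⟩
    · exact absurd h3.symm hne
    · rw [hσMapp]; exact h4.symm
  have hAM : ∀ v, G.Adj (σM v) v := fun v => (hadjM v).symm
  have hDM : (∑ v, Finsupp.single s(σM v, v) (1:ℕ)) = d := by
    rw [hd]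
    exact Finset.sum_congr rfl fun v _ => by rw [hσMapp, Sym2.eq_swap]
  set e : Perm V → F := fun σ => ∏ v, (if σ v < v then (1:F) else -1) with he
  have he_ne : ∀ σ, e σ ≠ 0 := by
    intro σ
    rw [he]
    refine Finset.prod_ne_zero_iff.mpr fun v _ => ?_
    split_ifs <;> simp
  have hcoeff : coeff d (tutteMatrix V F G).det = Perm.sign σM • e σM := by
    rw [Matrix.det_apply, coeff_sum]
    rw [Finset.sum_eq_single_of_mem σM (mem_univ _)]
    · rw [coeff_smul, prod_tm_eq σM hAM, hDM, coeff_monomial, if_pos rfl]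
    · intro σ _ hσ
      rw [coeff_smul]
      by_cases hA : ∀ v, G.Adj (σ v) v
      · rw [prod_tm_eq σ hA, coeff_monomial,
          if_neg (fun h => hσ (key1 σ hA h)), smul_zero]
      · push_neg at hA
        obtain ⟨v, hv⟩ := hA
        rw [show (∏ w, tutteMatrix V F G (σ w) w) = 0 from
          Finset.prod_eq_zero (mem_univ v) (tm_not_adj hv), coeff_zero, smul_zero]
  intro h0
  rw [h0, coeff_zero] at hcoeff
  have : e σM = 0 := by
    rcases Int.units_eq_one_or (Perm.sign σM) with h | h <;> rw [h] at hcoeff <;>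
      simpa using hcoeff.symm
  exact he_ne σM this



lemma exists_pm (σ : Perm V) (hadj : ∀ v, G.Adj (σ v) v)
    (heven : ∀ v, Even ((σ.cycleOf v).support.card)) :
    ∃ M : G.Subgraph, M.IsPerfectMatching := by
  have hne : ∀ v, σ v ≠ v := fun v => (hadj v).ne
  have hvmem : ∀ v : V, v ∈ (σ.cycleOf v).support :=
    fun v => (Equiv.Perm.mem_support_cycleOf_iff' (hne v)).mpr (Equiv.Perm.SameCycle.refl σ v)
  set b : V → V := fun v => ((σ.cycleOf v).support).min' ⟨v, hvmem v⟩ with hbdef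
  have hbmem : ∀ v, b v ∈ (σ.cycleOf v).support := fun v => Finset.min'_mem _ _
  have hbsc : ∀ v, Equiv.Perm.SameCycle σ (b v) v :=
    fun v => ((Equiv.Perm.mem_support_cycleOf_iff' (hne v)).mp (hbmem v)).symm
  have hbσ : ∀ v, b (σ v) = v → True := fun _ _ => trivial
  -- b is constant on cycles
  have hbc : ∀ v w, σ.cycleOf v = σ.cycleOf w → b v = b w := by
    intro v w h; simp only [hbdef]; congr 1; rw [h]
  have hbapp : ∀ v, b (σ v) = b v :=
    fun v => hbc (σ v) v (Equiv.Perm.cycleOf_self_apply σ v)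
  have hbinv : ∀ v, b (σ⁻¹ v) = b v := by
    intro v
    have := Equiv.Perm.cycleOf_self_apply σ (σ⁻¹ v)
    rw [Equiv.Perm.coe_inv, Equiv.apply_symm_apply] at this
    exact hbc (σ⁻¹ v) v this.symm
  have hbb : ∀ v, b (b v) = b v := by
    intro v
    exact hbc (b v) v ((hbsc v).symm.cycleOf_eq).symm
  -- existence of a power
  have hP : ∀ v : V, ∃ n : ℕ, (σ ^ n) (b v) = v := by
    intro v
    obtain ⟨i, _, hi⟩ := (hbsc v).exists_pow_eq'
    exact ⟨i, hi⟩
  set pos : V → ℕ := fun v => Nat.find (hP v) with hposdef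
  have hpos : ∀ v, (σ ^ pos v) (b v) = v := fun v => Nat.find_spec (hP v)
  have hmin : ∀ v k, k < pos v → (σ ^ k) (b v) ≠ v := fun v k hk => Nat.find_min (hP v) hk
  set L : V → ℕ := fun v => (σ.cycleOf v).support.card with hLdef
  have hLb : ∀ v, L (b v) = L v := by
    intro v
    simp only [hLdef]
    rw [(hbsc v).symm.cycleOf_eq]
  have hLpos : ∀ v, 0 < L v := fun v => Finset.card_pos.mpr ⟨v, hvmem v⟩
  have hposlt : ∀ v, pos v < L v := by
    intro v
    by_contra hge
    push_neg at hge
    have h1 : (σ ^ (pos v % L (b v))) (b v) = v := by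
      rw [Equiv.Perm.pow_mod_card_support_cycleOf_self_apply σ (pos v) (b v)]
      exact hpos v
    rw [hLb] at h1
    exact hmin v _ (lt_of_lt_of_le (Nat.mod_lt _ (hLpos v)) hge) h1
  -- powers below L don't fix b v
  have hfix : ∀ v k, 0 < k → k < L v → (σ ^ k) (b v) ≠ b v := by
    intro v k hk0 hkL hEq
    have hc : (σ.cycleOf (b v)).IsCycle := σ.isCycle_cycleOf (hne (b v))
    have h1 : ((σ.cycleOf (b v)) ^ k) (b v) = b v := by
      rw [Equiv.Perm.cycleOf_pow_apply_self]; exact hEq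
    have h2 : (σ.cycleOf (b v)) ^ k = 1 := (hc.pow_eq_one_iff' ?_).mpr h1
    · have h3 : orderOf (σ.cycleOf (b v)) ∣ k := orderOf_dvd_of_pow_eq_one h2
      rw [hc.orderOf] at h3
      have h4 : (σ.cycleOf (b v)).support.card ≤ k := Nat.le_of_dvd hk0 h3
      have : L (b v) ≤ k := h4
      rw [hLb] at this
      omega
    · rw [Equiv.Perm.cycleOf_apply_self]; exact hne (b v)
  -- transition lemmas
  have trans1 : ∀ v, pos v + 1 < L v → pos (σ v) = pos v + 1 := by
    intro v hlt
    have hle : pos (σ v) ≤ pos v + 1 := by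
      apply Nat.find_le
      rw [hbapp, pow_succ']
      simp [hpos v]
    rcases Nat.lt_or_ge (pos (σ v)) (pos v + 1) with hk | hk
    · exfalso
      have hspec : (σ ^ pos (σ v)) (b v) = σ v := by
        have := hpos (σ v); rwa [hbapp] at this
      rcases Nat.eq_zero_or_pos (pos (σ v)) with h0 | h0
      · rw [h0, pow_zero] at hspec
        simp only [Equiv.Perm.one_apply] at hspec
        have : (σ ^ (pos v + 1)) (b v) = b v := by
          rw [pow_succ']
          simp only [Equiv.Perm.mul_apply, Equiv.Perm.coe_mul, Function.comp_apply]
          rw [hpos v, hspec]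
        exact hfix v (pos v + 1) (Nat.succ_pos _) hlt this
      · obtain ⟨k, hk2⟩ := Nat.exists_eq_succ_of_ne_zero h0.ne'
        rw [hk2, pow_succ'] at hspec
        have : (σ ^ k) (b v) = v := σ.injective hspec
        exact hmin v k (by omega) this
    · omega
  have trans2 : ∀ v, 0 < pos v → pos (σ⁻¹ v) = pos v - 1 := by
    intro v h0
    obtain ⟨k, hk⟩ := Nat.exists_eq_succ_of_ne_zero h0.ne'
    have hwk : (σ ^ k) (b v) = σ⁻¹ v := by
      have hh := hpos v
      rw [hk, pow_succ'] at hh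
      simp only [Equiv.Perm.mul_apply, Equiv.Perm.coe_mul, Function.comp_apply] at hh
      apply σ.injective
      simp [hh]
    have hle : pos (σ⁻¹ v) ≤ k := by
      apply Nat.find_le
      rw [hbinv]; exact hwk
    rcases Nat.lt_or_ge (pos (σ⁻¹ v)) k with hlt | hge
    · exfalso
      have hspec : (σ ^ pos (σ⁻¹ v)) (b v) = σ⁻¹ v := by
        have := hpos (σ⁻¹ v); rwa [hbinv] at this
      have : (σ ^ (pos (σ⁻¹ v) + 1)) (b v) = v := by
        rw [pow_succ']
        simp only [Equiv.Perm.mul_apply, Equiv.Perm.coe_mul, Function.comp_apply]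
        rw [hspec]
        simp
      exact hmin v _ (by omega) this
    · omega
  -- the partner function
  set p : V → V := fun v => if Even (pos v) then σ v else σ⁻¹ v with hpdef
  have hLeven : ∀ v, Even (L v) := fun v => heven v
  have htrans1' : ∀ v, Even (pos v) → pos (σ v) = pos v + 1 := by
    intro v hv
    apply trans1
    have h1 : pos v + 1 ≤ L v := hposlt v
    rcases Nat.lt_or_ge (pos v + 1) (L v) with h | h
    · exact h
    · exfalso
      have heq : pos v + 1 = L v := le_antisymm h1 h
      have hE := hLeven v
      rw [← heq, Nat.even_add_one] at hE
      exact hE hv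
  have htrans2' : ∀ v, ¬ Even (pos v) → pos (σ⁻¹ v) = pos v - 1 := by
    intro v hv
    exact trans2 v (Nat.pos_of_ne_zero fun h => hv (h ▸ Even.zero))
  have hpinv : Function.Involutive p := by
    intro v
    by_cases hv : Even (pos v)
    · have h1 : p v = σ v := if_pos hv
      have h2 : ¬ Even (pos (σ v)) := by
        rw [htrans1' v hv, Nat.even_add_one]
        simpa using hv
      rw [h1, hpdef]
      simp only [if_neg h2]
      simp
    · have h1 : p v = σ⁻¹ v := if_neg hv
      have h2 : Even (pos (σ⁻¹ v)) := by
        rw [htrans2' v hv]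
        rcases Nat.not_even_iff_odd.mp hv with ⟨k, hk⟩
        exact ⟨k, by omega⟩
      rw [h1, hpdef]
      simp only [if_pos h2]
      simp
  have hpadj : ∀ v, G.Adj v (p v) := by
    intro v
    by_cases hv : Even (pos v)
    · have h1 : p v = σ v := if_pos hv
      rw [h1]; exact (hadj v).symm
    · have h1 : p v = σ⁻¹ v := if_neg hv
      rw [h1]
      have h2 := hadj (σ⁻¹ v)
      rwa [Equiv.Perm.coe_inv, Equiv.apply_symm_apply] at h2
  refine ⟨⟨Set.univ, fun a bb => p a = bb, ?_, ?_, ?_⟩, ?_, fun v => trivial⟩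
  · rintro a bb rfl; exact hpadj a
  · intro a bb _; trivial
  · constructor; rintro a bb rfl; exact hpinv a
  · intro v _
    exact ⟨p v, rfl, fun y hy => Eq.symm (show p v = y from hy)⟩


section decomp
variable (σ : Perm V) (v₀ : V) (h₀ : σ v₀ ≠ v₀)

include h₀

local notation "c" => σ.cycleOf v₀
local notation "ρ" => σ * (σ.cycleOf v₀)⁻¹

lemma hc_apply : ∀ x ∈ (σ.cycleOf v₀).support, (σ.cycleOf v₀) x = σ x := by
  intro x hx
  exact ((Equiv.Perm.mem_support_cycleOf_iff' h₀).mp hx).cycleOf_apply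

lemma hclosed : ∀ x ∈ (σ.cycleOf v₀).support, σ x ∈ (σ.cycleOf v₀).support := by
  intro x hx
  rw [Equiv.Perm.mem_support_cycleOf_iff' h₀] at hx ⊢
  exact hx.apply_right

lemma hclosed_inv : ∀ x ∈ (σ.cycleOf v₀).support, σ⁻¹ x ∈ (σ.cycleOf v₀).support := by
  intro x hx
  rw [Equiv.Perm.mem_support_cycleOf_iff' h₀] at hx ⊢
  exact (Equiv.Perm.sameCycle_symm_apply_right).mpr hx

lemma hcinv_apply : ∀ x ∈ (σ.cycleOf v₀).support, (σ.cycleOf v₀)⁻¹ x = σ⁻¹ x := by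
  intro x hx
  have h1 : (σ.cycleOf v₀) (σ⁻¹ x) = x := by
    rw [hc_apply σ v₀ h₀ _ (hclosed_inv σ v₀ h₀ x hx)]
    simp
  exact (Equiv.Perm.inv_eq_iff_eq).mpr h1.symm

lemma hrho_mem : ∀ x ∈ (σ.cycleOf v₀).support, ρ x = x := by
  intro x hx
  simp only [Equiv.Perm.mul_apply]
  rw [hcinv_apply σ v₀ h₀ x hx]
  simp

lemma hrho_nmem : ∀ x ∉ (σ.cycleOf v₀).support, ρ x = σ x := by
  intro x hx
  have h1 : (σ.cycleOf v₀)⁻¹ x = x := by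
    apply Equiv.Perm.notMem_support.mp
    rwa [Equiv.Perm.support_inv]
  simp only [Equiv.Perm.mul_apply, h1]

lemma hdisj : Equiv.Perm.Disjoint (σ.cycleOf v₀) ρ := by
  intro x
  by_cases hx : x ∈ (σ.cycleOf v₀).support
  · exact Or.inr (hrho_mem σ v₀ h₀ x hx)
  · exact Or.inl (Equiv.Perm.notMem_support.mp hx)

lemma hdisj_inv : Equiv.Perm.Disjoint (σ.cycleOf v₀)⁻¹ ρ := by
  intro x
  rcases hdisj σ v₀ h₀ x with h | h
  · exact Or.inl ((Equiv.Perm.inv_eq_iff_eq).mpr h.symm)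
  · exact Or.inr h

lemma hdecomp : σ = (σ.cycleOf v₀) * ρ := by
  ext x
  rw [Equiv.Perm.mul_apply]
  by_cases hx : x ∈ (σ.cycleOf v₀).support
  · rw [hrho_mem σ v₀ h₀ x hx, hc_apply σ v₀ h₀ x hx]
  · rw [hrho_nmem σ v₀ h₀ x hx]
    have hnm : σ x ∉ (σ.cycleOf v₀).support := by
      intro hmem
      have h2 := hclosed_inv σ v₀ h₀ _ hmem
      simp only [Equiv.Perm.coe_inv, Equiv.symm_apply_apply] at h2
      exact hx h2
    exact (Equiv.Perm.notMem_support.mp hnm).symm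

lemma tau_apply_mem : ∀ x ∈ (σ.cycleOf v₀).support, ((σ.cycleOf v₀)⁻¹ * ρ) x = σ⁻¹ x := by
  intro x hx
  rw [Equiv.Perm.mul_apply, hrho_mem σ v₀ h₀ x hx, hcinv_apply σ v₀ h₀ x hx]

lemma tau_apply_nmem : ∀ x ∉ (σ.cycleOf v₀).support, ((σ.cycleOf v₀)⁻¹ * ρ) x = σ x := by
  intro x hx
  rw [Equiv.Perm.mul_apply, hrho_nmem σ v₀ h₀ x hx]
  have hσx : σ x ∉ (σ.cycleOf v₀).support := by
    intro hmem
    have h2 := hclosed_inv σ v₀ h₀ _ hmem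
    simp only [Equiv.Perm.coe_inv, Equiv.symm_apply_apply] at h2
    exact hx h2
  have h3 : σ x ∉ ((σ.cycleOf v₀)⁻¹).support := by rwa [Equiv.Perm.support_inv]
  exact Equiv.Perm.notMem_support.mp h3

lemma tau_cycleOf_card : ∀ x, ((((σ.cycleOf v₀)⁻¹ * ρ).cycleOf x).support.card) =
    ((σ.cycleOf x).support.card) := by
  intro x
  have hC : (σ.cycleOf v₀).IsCycle := σ.isCycle_cycleOf h₀
  have h1 := (hdisj_inv σ v₀ h₀).cycleOf_mul_distrib x
  have h2 : σ.cycleOf x = ((σ.cycleOf v₀) * ρ).cycleOf x := by rw [← hdecomp σ v₀ h₀]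
  have h3 := (hdisj σ v₀ h₀).cycleOf_mul_distrib x
  by_cases hx : x ∈ (σ.cycleOf v₀).support
  · have hcx : (σ.cycleOf v₀) x ≠ x := Equiv.Perm.mem_support.mp hx
    have hρ1 : Equiv.Perm.cycleOf (σ * (σ.cycleOf v₀)⁻¹) x = 1 := (Equiv.Perm.cycleOf_eq_one_iff _).mpr (hrho_mem σ v₀ h₀ x hx)
    have hcinvx : (σ.cycleOf v₀)⁻¹ x ≠ x := by
      simp only [ne_eq, Equiv.Perm.inv_eq_iff_eq]
      exact fun h => hcx h.symm
    rw [h1, hρ1, mul_one, hC.inv.cycleOf_eq hcinvx]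
    rw [h2, h3, hρ1, mul_one, hC.cycleOf_eq hcx]
    rw [Equiv.Perm.support_inv]
  · have hcx : (σ.cycleOf v₀) x = x := Equiv.Perm.notMem_support.mp hx
    have hc1 : ((σ.cycleOf v₀)).cycleOf x = 1 := (Equiv.Perm.cycleOf_eq_one_iff _).mpr hcx
    have hc1' : ((σ.cycleOf v₀)⁻¹).cycleOf x = 1 :=
      (Equiv.Perm.cycleOf_eq_one_iff _).mpr ((Equiv.Perm.inv_eq_iff_eq).mpr hcx.symm)
    rw [h1, hc1', one_mul, h2, h3, hc1, one_mul]

lemma tau_cycleOf_v₀ : (((σ.cycleOf v₀)⁻¹ * ρ).cycleOf v₀) = (σ.cycleOf v₀)⁻¹ := by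
  have hC : (σ.cycleOf v₀).IsCycle := σ.isCycle_cycleOf h₀
  have h1 := (hdisj_inv σ v₀ h₀).cycleOf_mul_distrib v₀
  have hv : v₀ ∈ (σ.cycleOf v₀).support := by
    rw [Equiv.Perm.mem_support, Equiv.Perm.cycleOf_apply_self]; exact h₀
  have hρ1 : Equiv.Perm.cycleOf (σ * (σ.cycleOf v₀)⁻¹) v₀ = 1 := (Equiv.Perm.cycleOf_eq_one_iff _).mpr (hrho_mem σ v₀ h₀ v₀ hv)
  rw [h1, hρ1, mul_one, hC.inv.cycleOf_eq]
  simp only [ne_eq]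
  rw [show (σ.cycleOf v₀)⁻¹ v₀ = σ⁻¹ v₀ from hcinv_apply σ v₀ h₀ v₀ hv]
  intro h
  exact h₀ (by conv_lhs => rw [← h, Equiv.Perm.coe_inv, Equiv.apply_symm_apply]; )

lemma tau_sign : Equiv.Perm.sign ((σ.cycleOf v₀)⁻¹ * ρ) = Equiv.Perm.sign σ := by
  conv_rhs => rw [hdecomp σ v₀ h₀]
  simp [map_mul]

end decomp


lemma min'_congr {s t : Finset V} (h : s = t) (hs : s.Nonempty) :
    s.min' hs = t.min' (h ▸ hs) := by subst h; rfl

lemma no_pm_det_zero (hno : ∀ M : G.Subgraph, ¬ M.IsPerfectMatching) :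
    (tutteMatrix V F G).det = 0 := by
  rw [Matrix.det_apply]
  set OddF : Perm V → Finset V :=
    fun σ => univ.filter (fun v => ¬ Even ((σ.cycleOf v).support.card)) with hOddF
  have hOddNE : ∀ σ : Perm V, (∀ v, G.Adj (σ v) v) → (OddF σ).Nonempty := by
    intro σ hA
    by_contra h
    rw [Finset.not_nonempty_iff_eq_empty] at h
    have hev : ∀ v, Even ((σ.cycleOf v).support.card) := by
      intro v; by_contra hv
      have hm : v ∈ OddF σ := by
        rw [hOddF, Finset.mem_filter]
        exact ⟨mem_univ v, hv⟩
      rw [h] at hm; simp at hm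
    obtain ⟨M, hM⟩ := exists_pm σ hA hev
    exact hno M hM
  set g : Perm V → Perm V := fun σ =>
    if h : (∀ v, G.Adj (σ v) v) then
      (σ.cycleOf ((OddF σ).min' (hOddNE σ h)))⁻¹ *
        (σ * (σ.cycleOf ((OddF σ).min' (hOddNE σ h)))⁻¹)
    else σ with hg
  -- zero term for non-adjacent permutations
  have hzero : ∀ σ : Perm V, ¬ (∀ v, G.Adj (σ v) v) →
      (Perm.sign σ • ∏ v, tutteMatrix V F G (σ v) v) = 0 := by
    intro σ hA
    push_neg at hA
    obtain ⟨v, hv⟩ := hA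
    rw [show (∏ w, tutteMatrix V F G (σ w) w) = 0 from
      Finset.prod_eq_zero (mem_univ v) (tm_not_adj hv), smul_zero]
  -- facts about g in the adjacent case
  have hgA : ∀ (σ : Perm V) (hA : ∀ v, G.Adj (σ v) v),
      (∀ v, G.Adj ((g σ) v) v) ∧ OddF (g σ) = OddF σ := by
    intro σ hA
    set v₀ := (OddF σ).min' (hOddNE σ hA) with hv₀
    have h₀ : σ v₀ ≠ v₀ := (hA v₀).ne
    have hgσ : g σ = (σ.cycleOf v₀)⁻¹ * (σ * (σ.cycleOf v₀)⁻¹) := by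
      rw [hg]; simp only [dif_pos hA]; rfl
    constructor
    · intro v
      by_cases hv : v ∈ (σ.cycleOf v₀).support
      · rw [hgσ, tau_apply_mem σ v₀ h₀ v hv]
        have h2 := hA (σ⁻¹ v)
        rw [Equiv.Perm.coe_inv, Equiv.apply_symm_apply] at h2
        exact h2.symm
      · rw [hgσ, tau_apply_nmem σ v₀ h₀ v hv]
        exact hA v
    · ext w
      simp only [hOddF, Finset.mem_filter, Finset.mem_univ, true_and]
      rw [hgσ, tau_cycleOf_card σ v₀ h₀ w]
  -- g is an involution
  have hginv : ∀ σ : Perm V, g (g σ) = σ := by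
    intro σ
    by_cases hA : ∀ v, G.Adj (σ v) v
    · set v₀ := (OddF σ).min' (hOddNE σ hA) with hv₀
      have h₀ : σ v₀ ≠ v₀ := (hA v₀).ne
      obtain ⟨hAτ, hOFτ⟩ := hgA σ hA
      have hgσ : g σ = (σ.cycleOf v₀)⁻¹ * (σ * (σ.cycleOf v₀)⁻¹) := by
        rw [hg]; simp only [dif_pos hA]; rfl
      have hcτ : ((g σ).cycleOf v₀) = (σ.cycleOf v₀)⁻¹ := by
        rw [hgσ]; exact tau_cycleOf_v₀ σ v₀ h₀
      have hcomm : Commute (σ.cycleOf v₀) (σ * (σ.cycleOf v₀)⁻¹) :=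
        (hdisj σ v₀ h₀).commute
      have hgτ : g (g σ) = ((g σ).cycleOf ((OddF (g σ)).min' (hOddNE (g σ) hAτ)))⁻¹ *
          ((g σ) * ((g σ).cycleOf ((OddF (g σ)).min' (hOddNE (g σ) hAτ)))⁻¹) := by
        exact dif_pos hAτ
      have hv₀τ : (OddF (g σ)).min' (hOddNE (g σ) hAτ) = v₀ := by
        rw [min'_congr hOFτ (hOddNE (g σ) hAτ)]
      rw [hgτ, hv₀τ, hcτ, inv_inv]
      conv_lhs => rw [hgσ]
      have hρc : (σ.cycleOf v₀)⁻¹ * (σ * (σ.cycleOf v₀)⁻¹) * (σ.cycleOf v₀) =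
          σ * (σ.cycleOf v₀)⁻¹ := by
        rw [hcomm.inv_left.eq, mul_assoc, inv_mul_cancel, mul_one]
      rw [hρc]
      exact (hdecomp σ v₀ h₀).symm
    · have h2 : g σ = σ := by rw [hg]; simp only [dif_neg hA]
      rw [h2, h2]
  -- antisymmetry of terms
  have hterm : ∀ σ : Perm V, (∀ v, G.Adj (σ v) v) →
      (Perm.sign (g σ) • ∏ v, tutteMatrix V F G ((g σ) v) v) = - (Perm.sign σ • ∏ v, tutteMatrix V F G (σ v) v) := by
    intro σ hA
    set v₀ := (OddF σ).min' (hOddNE σ hA) with hv₀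
    have h₀ : σ v₀ ≠ v₀ := (hA v₀).ne
    have hgσ : g σ = (σ.cycleOf v₀)⁻¹ * (σ * (σ.cycleOf v₀)⁻¹) := by
      rw [hg]; simp only [dif_pos hA]; rfl
    have hsign : Perm.sign (g σ) = Perm.sign σ := by rw [hgσ]; exact tau_sign σ v₀ h₀
    have hodd : ¬ Even ((σ.cycleOf v₀).support.card) := by
      have hOmem : ∀ w ∈ OddF σ, ¬ Even ((σ.cycleOf w).support.card) := by
        intro w hw
        rw [hOddF, Finset.mem_filter] at hw
        exact hw.2
      exact hOmem _ (Finset.min'_mem (OddF σ) (hOddNE σ hA))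
    set s := (σ.cycleOf v₀).support with hs
    have hprod : (∏ v, tutteMatrix V F G ((g σ) v) v) = - ∏ v, tutteMatrix V F G (σ v) v := by
      rw [← Finset.prod_mul_prod_compl s (fun v => tutteMatrix V F G ((g σ) v) v),
          ← Finset.prod_mul_prod_compl s (fun v => tutteMatrix V F G (σ v) v)]
      have h2 : (∏ v ∈ sᶜ, tutteMatrix V F G ((g σ) v) v) = ∏ v ∈ sᶜ, tutteMatrix V F G (σ v) v := by
        refine Finset.prod_congr rfl fun v hv => ?_
        rw [hgσ, tau_apply_nmem σ v₀ h₀ v (Finset.mem_compl.mp hv)]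
      have h3 : (∏ v ∈ s, tutteMatrix V F G ((g σ) v) v) = ∏ v ∈ s, tutteMatrix V F G (σ⁻¹ v) v := by
        refine Finset.prod_congr rfl fun v hv => ?_
        rw [hgσ, tau_apply_mem σ v₀ h₀ v hv]
      have h4 : (∏ v ∈ s, tutteMatrix V F G (σ⁻¹ v) v) = ∏ w ∈ s, tutteMatrix V F G w (σ w) := by
        refine Finset.prod_bij' (fun v _ => σ⁻¹ v) (fun w _ => σ w) ?_ ?_ ?_ ?_ ?_
        · intro v hv; exact hclosed_inv σ v₀ h₀ v hv
        · intro w hw; exact hclosed σ v₀ h₀ w hw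
        · intro v hv; simp
        · intro w hw; simp
        · intro v hv; simp
      have h5 : (∏ w ∈ s, tutteMatrix V F G w (σ w)) = (-1) ^ s.card * ∏ w ∈ s, tutteMatrix V F G (σ w) w := by
        rw [← Finset.prod_const, ← Finset.prod_mul_distrib]
        refine Finset.prod_congr rfl fun w hw => ?_
        rw [tm_skew w (σ w) (hA w).ne']
        ring
      rw [h2, h3, h4, h5, (Nat.not_even_iff_odd.mp hodd).neg_one_pow]
      ring
    rw [hsign, hprod, smul_neg]
  -- conclude by involution
  refine Finset.sum_ninvolution g ?_ ?_ (fun _ => mem_univ _) hginv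
  · intro σ
    by_cases hA : ∀ v, G.Adj (σ v) v
    · rw [hterm σ hA]; ring
    · have h1 := hzero σ hA
      have h2 : g σ = σ := by rw [hg]; simp only [dif_neg hA]
      rw [h2, h1]; ring
  · intro σ hfσ
    have hA : ∀ v, G.Adj (σ v) v := by
      by_contra hA
      exact hfσ (hzero σ hA)
    set v₀ := (OddF σ).min' (hOddNE σ hA) with hv₀
    have h₀ : σ v₀ ≠ v₀ := (hA v₀).ne
    have hgσ : g σ = (σ.cycleOf v₀)⁻¹ * (σ * (σ.cycleOf v₀)⁻¹) := by
      rw [hg]; simp only [dif_pos hA]; rfl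
    intro hEq
    have hceq : (σ.cycleOf v₀)⁻¹ = σ.cycleOf v₀ := by
      have h1 : (σ.cycleOf v₀)⁻¹ * (σ * (σ.cycleOf v₀)⁻¹) =
          (σ.cycleOf v₀) * (σ * (σ.cycleOf v₀)⁻¹) := by
        rw [← hgσ, hEq]
        conv_lhs => rw [hdecomp σ v₀ h₀]
      exact mul_right_cancel h1
    have hc2 : (σ.cycleOf v₀) ^ 2 = 1 := by
      rw [sq]
      nth_rewrite 1 [← hceq]
      rw [inv_mul_cancel]
    have hC : (σ.cycleOf v₀).IsCycle := σ.isCycle_cycleOf h₀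
    have hdvd : orderOf (σ.cycleOf v₀) ∣ 2 := orderOf_dvd_of_pow_eq_one hc2
    have hodd : ¬ Even ((σ.cycleOf v₀).support.card) := by
      have hOmem : ∀ w ∈ OddF σ, ¬ Even ((σ.cycleOf w).support.card) := by
        intro w hw
        rw [hOddF, Finset.mem_filter] at hw
        exact hw.2
      exact hOmem _ (Finset.min'_mem (OddF σ) (hOddNE σ hA))
    rw [← hC.orderOf] at hodd
    have h12 : orderOf (σ.cycleOf v₀) = 1 ∨ orderOf (σ.cycleOf v₀) = 2 :=
      (Nat.dvd_prime Nat.prime_two).mp hdvd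
    rcases h12 with h1 | h2
    · exact hC.ne_one (orderOf_eq_one_iff.mp h1)
    · rw [h2] at hodd
      exact hodd even_two


end TutteAux

/-- Tutte's theorem: a finite simple graph `G` has a perfect matching if and only if the
determinant of its Tutte matrix is not the zero polynomial. -/
theorem tutte_matrix_det_ne_zero_iff_perfect_matching
    (V F : Type) [Fintype V] [LinearOrder V] [Field F] (G : SimpleGraph V) :
    (∃ M : G.Subgraph, M.IsPerfectMatching) ↔ (tutteMatrix V F G).det ≠ 0 := by
  constructor
  · rintro ⟨M, hM⟩
    exact TutteAux.pm_det_ne_zero M hM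
  · intro hdet
    by_contra h
    push_neg at h
    exact hdet (TutteAux.no_pm_det_zero h)
end

section
/- Let G = G₀ + G₁ be the disjoint union of two simple graphs G₀ = (V, E₀) and G₁ = (V, E₁) on the same vertex set V with |V| = n even, and let T(G₀, G₁) = T(G₀) + y·T(G₁) be the weighted Tutte matrix over F[X_E, y]. Then for each k = 0, 1, …, n/2, the graph G has a perfect matching of weight exactly k if and only if the coefficient of y^k in pf T(G₀, G₁) is not the zero polynomial in F[X_E]. -/
open scoped Classical

/-- The index `2i` (0-based), corresponding to `2i - 1` in 1-based notation. -/
def evenIdx {m : ℕ} (i : Fin m) : Fin (2 * m) := ⟨2 * i.val, by have := i.isLt; omega⟩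

/-- The index `2i + 1` (0-based), corresponding to `2i` in 1-based notation. -/
def oddIdx {m : ℕ} (i : Fin m) : Fin (2 * m) := ⟨2 * i.val + 1, by have := i.isLt; omega⟩

/-- The pfaffian of a `2m × 2m` matrix: the sum over all permutations `σ` of
`{0, …, 2m-1}` satisfying `σ(0) < σ(2) < ⋯ < σ(2m-2)` and `σ(2i) < σ(2i+1)` for each `i`
of `sgn(σ) · Π_i A_{σ(2i), σ(2i+1)}`. -/
noncomputable def pfaffian {R : Type} [CommRing R] {m : ℕ}
    (A : Matrix (Fin (2 * m)) (Fin (2 * m)) R) : R :=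
  ∑ σ ∈ Finset.univ.filter (fun σ : Equiv.Perm (Fin (2 * m)) =>
      (∀ i : Fin m, σ (evenIdx i) < σ (oddIdx i)) ∧
      StrictMono fun i : Fin m => σ (evenIdx i)),
    (Equiv.Perm.sign σ : ℤ) • ∏ i : Fin m, A (σ (evenIdx i)) (σ (oddIdx i))

/-- The Tutte-type matrix of a graph `G` on `Fin n` with entry values `f e` for the edge
`e` (sign according to the order of the endpoints). -/
noncomputable def tutteAux {R : Type} [CommRing R] {n : ℕ} (G : SimpleGraph (Fin n))
    (f : Sym2 (Fin n) → R) : Matrix (Fin n) (Fin n) R :=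
  fun u v => if G.Adj u v then (if u < v then f s(u, v) else - f s(u, v)) else 0

/-- `(M₀, M₁)` is a perfect matching of the disjoint union `G₀ + G₁` of weight `k`:
`M₀` consists of (weight-0) edges of `G₀`, `M₁` of (weight-1) edges of `G₁`, all chosen
edges are pairwise vertex-disjoint, every vertex is covered, and exactly `k` edges come
from `G₁`. -/
def IsPerfectMatchingPairOfWeight {n : ℕ} (G₀ G₁ : SimpleGraph (Fin n))
    (M₀ M₁ : Finset (Sym2 (Fin n))) (k : ℕ) : Prop :=
  ↑M₀ ⊆ G₀.edgeSet ∧ ↑M₁ ⊆ G₁.edgeSet ∧ Disjoint M₀ M₁ ∧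
  ((↑(M₀ ∪ M₁) : Set (Sym2 (Fin n))).Pairwise fun e f => ∀ v, v ∈ e → v ∉ f) ∧
  (∀ v : Fin n, ∃ e ∈ M₀ ∪ M₁, v ∈ e) ∧ M₁.card = k

/-- The weighted Tutte matrix `T(G₀, G₁) = T(G₀) + y·T(G₁)` over `F[X_E][y]`, with one
indeterminate for each edge of the disjoint union `E = E₀ ⊔ E₁` (`Sum.inl` for edges of
`G₀`, `Sum.inr` for edges of `G₁`) and the extra indeterminate `y = Polynomial.X`. -/
noncomputable def weightedTutteMatrix (F : Type) [Field F] {n : ℕ}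
    (G₀ G₁ : SimpleGraph (Fin n)) :
    Matrix (Fin n) (Fin n)
      (Polynomial (MvPolynomial (Sym2 (Fin n) ⊕ Sym2 (Fin n)) F)) :=
  tutteAux (R := Polynomial (MvPolynomial (Sym2 (Fin n) ⊕ Sym2 (Fin n)) F)) G₀ (fun e => Polynomial.C (MvPolynomial.X (Sum.inl e))) +
    (Polynomial.X : Polynomial (MvPolynomial (Sym2 (Fin n) ⊕ Sym2 (Fin n)) F)) •
      tutteAux (R := Polynomial (MvPolynomial (Sym2 (Fin n) ⊕ Sym2 (Fin n)) F)) G₁ (fun e => Polynomial.C (MvPolynomial.X (Sum.inr e)))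

lemma coeff_prod_linear {S : Type*} [CommRing S] {m : ℕ} (a b : Fin m → S) (k : ℕ) :
    (∏ i, (Polynomial.C (a i) + Polynomial.X * Polynomial.C (b i))).coeff k
      = ∑ T ∈ Finset.powersetCard k Finset.univ,
          (∏ i ∈ T, b i) * ∏ i ∈ Tᶜ, a i := by
  have h : ∀ i ∈ Finset.univ, (Polynomial.C (a i) + Polynomial.X * Polynomial.C (b i))
      = (Polynomial.X * Polynomial.C (b i) + Polynomial.C (a i)) := by
    intro i _; ring
  rw [Finset.prod_congr rfl h, Finset.prod_add]
  have h2 : ∀ t : Finset (Fin m),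
      ((∏ i ∈ t, Polynomial.X * Polynomial.C (b i)) * ∏ i ∈ Finset.univ \ t, Polynomial.C (a i))
      = Polynomial.monomial t.card ((∏ i ∈ t, b i) * ∏ i ∈ tᶜ, a i) := by
    intro t
    rw [Finset.prod_mul_distrib, Finset.prod_const, ← map_prod, ← map_prod,
      ← Finset.compl_eq_univ_sdiff]
    rw [← Polynomial.C_mul_X_pow_eq_monomial, Polynomial.C_mul]; ring
  rw [Polynomial.finset_sum_coeff]
  simp_rw [h2, Polynomial.coeff_monomial]
  rw [Finset.powersetCard_eq_filter, Finset.sum_filter]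

section Aux
variable (F : Type) [Field F] {m : ℕ} (G₀ G₁ : SimpleGraph (Fin (2 * m)))

/-- The `i`-th edge (pair) of a permutation. -/
def edg (σ : Equiv.Perm (Fin (2 * m))) (i : Fin m) : Sym2 (Fin (2 * m)) :=
  s(σ (evenIdx i), σ (oddIdx i))

noncomputable def aE (σ : Equiv.Perm (Fin (2 * m))) (i : Fin m) :
    MvPolynomial (Sym2 (Fin (2 * m)) ⊕ Sym2 (Fin (2 * m))) F :=
  if G₀.Adj (σ (evenIdx i)) (σ (oddIdx i)) then MvPolynomial.X (Sum.inl (edg σ i)) else 0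

noncomputable def bE (σ : Equiv.Perm (Fin (2 * m))) (i : Fin m) :
    MvPolynomial (Sym2 (Fin (2 * m)) ⊕ Sym2 (Fin (2 * m))) F :=
  if G₁.Adj (σ (evenIdx i)) (σ (oddIdx i)) then MvPolynomial.X (Sum.inr (edg σ i)) else 0

lemma wtm_entry {u v : Fin (2 * m)} (huv : u < v) :
    weightedTutteMatrix F G₀ G₁ u v
      = Polynomial.C (if G₀.Adj u v then MvPolynomial.X (Sum.inl s(u, v)) else 0)
        + Polynomial.X * Polynomial.C
            (if G₁.Adj u v then MvPolynomial.X (Sum.inr s(u, v)) else 0) := by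
  simp only [weightedTutteMatrix, tutteAux, Matrix.add_apply, Matrix.smul_apply, huv, if_true,
    smul_eq_mul, apply_ite Polynomial.C, Polynomial.C_0, mul_ite, mul_zero]

lemma coeff_pfaffian (k : ℕ) :
    (pfaffian (weightedTutteMatrix F G₀ G₁)).coeff k
      = ∑ σ ∈ Finset.univ.filter (fun σ : Equiv.Perm (Fin (2 * m)) =>
            (∀ i : Fin m, σ (evenIdx i) < σ (oddIdx i)) ∧
            StrictMono fun i : Fin m => σ (evenIdx i)),
          (Equiv.Perm.sign σ : ℤ) • ∑ T ∈ Finset.powersetCard k Finset.univ,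
            (∏ i ∈ T, bE F G₁ σ i) * ∏ i ∈ Tᶜ, aE F G₀ σ i := by
  unfold pfaffian
  rw [Polynomial.finset_sum_coeff]
  refine Finset.sum_congr rfl fun σ hσ => ?_
  rw [Polynomial.coeff_smul]
  congr 1
  have h1 : ∀ i : Fin m, σ (evenIdx i) < σ (oddIdx i) := (Finset.mem_filter.mp hσ).2.1
  rw [Finset.prod_congr rfl fun i _ => wtm_entry F G₀ G₁ (h1 i)]
  exact coeff_prod_linear _ _ k

lemma edg_inj (σ : Equiv.Perm (Fin (2 * m))) : Function.Injective (edg σ) := by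
  intro i j h
  rw [edg, edg, Sym2.eq_iff] at h
  rcases h with ⟨h1, _⟩ | ⟨h1, h2⟩
  · have := σ.injective h1
    simp only [evenIdx, Fin.mk.injEq] at this
    exact Fin.ext (by omega)
  · have h1' := σ.injective h1
    simp only [evenIdx, oddIdx, Fin.mk.injEq] at h1'
    omega

lemma mem_edg {σ : Equiv.Perm (Fin (2 * m))} {i : Fin m} {v : Fin (2 * m)} :
    v ∈ edg σ i ↔ v = σ (evenIdx i) ∨ v = σ (oddIdx i) := Sym2.mem_iff

lemma idx_split (j : Fin (2 * m)) : ∃ i : Fin m, j = evenIdx i ∨ j = oddIdx i := by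
  refine ⟨⟨j.val / 2, by have := j.isLt; omega⟩, ?_⟩
  rcases Nat.even_or_odd j.val with ⟨c, hc⟩ | ⟨c, hc⟩
  · exact Or.inl (Fin.ext (by simp [evenIdx]; omega))
  · exact Or.inr (Fin.ext (by simp [oddIdx]; omega))

lemma matching_of_adj {σ : Equiv.Perm (Fin (2 * m))} {T : Finset (Fin m)} {k : ℕ}
    (hT : T.card = k)
    (ha : ∀ i ∈ Tᶜ, G₀.Adj (σ (evenIdx i)) (σ (oddIdx i)))
    (hb : ∀ i ∈ T, G₁.Adj (σ (evenIdx i)) (σ (oddIdx i))) :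
    IsPerfectMatchingPairOfWeight G₀ G₁ (Tᶜ.image (edg σ)) (T.image (edg σ)) k := by
  have hinj := edg_inj (m := m) σ
  refine ⟨?_, ?_, ?_, ?_, ?_, ?_⟩
  · intro e he
    simp only [Finset.coe_image, Set.mem_image, Finset.mem_coe] at he
    obtain ⟨i, hi, rfl⟩ := he
    exact (SimpleGraph.mem_edgeSet _).mpr (ha i hi)
  · intro e he
    simp only [Finset.coe_image, Set.mem_image, Finset.mem_coe] at he
    obtain ⟨i, hi, rfl⟩ := he
    exact (SimpleGraph.mem_edgeSet _).mpr (hb i hi)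
  · exact (Finset.disjoint_image hinj).mpr (disjoint_compl_left)
  · rw [← Finset.image_union, ← Finset.union_comm, Finset.union_compl]
    intro e he f hf hne v hve hvf
    simp only [Finset.coe_image, Set.mem_image] at he hf
    obtain ⟨i, _, rfl⟩ := he
    obtain ⟨j, _, rfl⟩ := hf
    apply hne
    rw [mem_edg] at hve hvf
    have hij : i = j := by
      rcases hve with h1 | h1 <;> rcases hvf with h2 | h2 <;>
      · have := σ.injective (h1 ▸ h2 : _)
        simp only [evenIdx, oddIdx, Fin.mk.injEq] at this
        exact Fin.ext (by omega)
    rw [hij]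
  · intro v
    obtain ⟨i, hi⟩ := idx_split (σ.symm v)
    refine ⟨edg σ i, ?_, ?_⟩
    · rw [← Finset.image_union, ← Finset.union_comm, Finset.union_compl]
      exact Finset.mem_image_of_mem _ (Finset.mem_univ i)
    · rw [mem_edg]
      rcases hi with h | h
      · exact Or.inl (by rw [← h]; exact (σ.apply_symm_apply v).symm)
      · exact Or.inr (by rw [← h]; exact (σ.apply_symm_apply v).symm)
  · rw [Finset.card_image_of_injective _ hinj, hT]


noncomputable def emin {n : ℕ} (e : Sym2 (Fin n)) : Fin n :=
  Sym2.lift ⟨fun a b => min a b, fun a b => min_comm a b⟩ e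

@[simp] lemma emin_mk {n : ℕ} (a b : Fin n) : emin s(a, b) = min a b := rfl

lemma coeff_ne_zero_of_matching {M₀ M₁ : Finset (Sym2 (Fin (2 * m)))} {k : ℕ}
    (hM : IsPerfectMatchingPairOfWeight G₀ G₁ M₀ M₁ k) :
    (pfaffian (weightedTutteMatrix F G₀ G₁)).coeff k ≠ 0 := by
  obtain ⟨h0, h1, hdisj, hpair, hcov, hcard⟩ := hM
  set M := M₀ ∪ M₁ with hMdef
  have huniq : ∀ e ∈ M, ∀ f ∈ M, ∀ v, v ∈ e → v ∈ f → e = f := by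
    intro e he f hf v hve hvf
    by_contra hne
    exact hpair (Finset.mem_coe.mpr he) (Finset.mem_coe.mpr hf) hne v hve hvf
  have hnd : ∀ e ∈ M, ¬ e.IsDiag := by
    intro e he
    rcases Finset.mem_union.mp he with h | h
    · exact G₀.not_isDiag_of_mem_edgeSet (h0 (Finset.mem_coe.mpr h))
    · exact G₁.not_isDiag_of_mem_edgeSet (h1 (Finset.mem_coe.mpr h))
  have hex : ∀ v : Fin (2 * m), ∃ e, e ∈ M ∧ v ∈ e := by
    intro v; obtain ⟨e, he, hv⟩ := hcov v; exact ⟨e, he, hv⟩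
  choose E hEM hEv using hex
  set p : Fin (2 * m) → Fin (2 * m) := fun v => Sym2.Mem.other' (hEv v) with hp
  have hps : ∀ v, s(v, p v) = E v := fun v => Sym2.other_spec' (hEv v)
  have hpv : ∀ v, p v ∈ E v := fun v => by rw [← hps v]; exact Sym2.mem_mk_right _ _
  have hpne : ∀ v, p v ≠ v := by
    intro v h
    have hd : (E v).IsDiag := by rw [← hps v, h]; exact Sym2.mk_isDiag_iff.mpr rfl
    exact hnd _ (hEM v) hd
  have hEuniq : ∀ v e, e ∈ M → v ∈ e → e = E v :=
    fun v e he hv => huniq e he _ (hEM v) v hv (hEv v)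
  have hpp : ∀ v, p (p v) = v := by
    intro v
    have h1' : E v = E (p v) := hEuniq (p v) (E v) (hEM v) (hpv v)
    have h2' : s(p v, p (p v)) = s(p v, v) := by
      rw [hps (p v), ← h1', ← hps v, Sym2.eq_swap]
    exact Sym2.congr_right.mp h2'
  set Vmin : Finset (Fin (2 * m)) := Finset.univ.filter (fun v => v < p v) with hVmin
  have hmemVmin : ∀ v, v ∈ Vmin ↔ v < p v := by
    intro v; simp [hVmin]
  have hcompl : ∀ v, v ∉ Vmin ↔ p v < v := by
    intro v
    rw [hmemVmin]
    constructor
    · intro h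
      rcases lt_trichotomy v (p v) with h' | h' | h'
      · exact absurd h' h
      · exact absurd h'.symm (hpne v)
      · exact h'
    · intro h h'
      exact absurd (h.trans h') (lt_irrefl (p v))
  have hpVmin : ∀ v, v ∈ Vmin → p v ∉ Vmin := by
    intro v hv
    rw [hcompl, hpp]
    exact (hmemVmin v).mp hv
  have hVcard : Vmin.card = m := by
    have hbij : Vmin.card = Vminᶜ.card := by
      apply Finset.card_nbij p
      · exact fun v hv => Finset.mem_compl.mpr (hpVmin v hv)
      · exact fun x _ y _ h => by rw [← hpp x, h, hpp]
      · intro w hw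
        simp only [Finset.coe_compl, Set.mem_compl_iff, Finset.mem_coe] at hw
        refine ⟨p w, ?_, hpp w⟩
        rw [Finset.mem_coe, hmemVmin, hpp]
        exact (hcompl w).mp hw
    have hc := Finset.card_add_card_compl Vmin
    rw [Fintype.card_fin] at hc
    omega
  set ℓ : Fin m → Fin (2 * m) := fun i => Vmin.orderEmbOfFin hVcard i with hℓ
  have hℓmem : ∀ i, ℓ i ∈ Vmin := fun i => Vmin.orderEmbOfFin_mem hVcard i
  have hℓmono : StrictMono ℓ := (Vmin.orderEmbOfFin hVcard).strictMono
  have hℓsurj : ∀ w ∈ Vmin, ∃ i, ℓ i = w := by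
    intro w hw
    have hr : w ∈ Set.range (Vmin.orderEmbOfFin hVcard) := by
      rw [Finset.range_orderEmbOfFin]; exact hw
    exact hr
  set f : Fin (2 * m) → Fin (2 * m) := fun j =>
    if j.val % 2 = 0 then ℓ ⟨j.val / 2, by have := j.isLt; omega⟩
    else p (ℓ ⟨j.val / 2, by have := j.isLt; omega⟩) with hf
  have hfe : ∀ i : Fin m, f (evenIdx i) = ℓ i := by
    intro i
    have h2 : (2 * i.val) % 2 = 0 := by omega
    show (if (evenIdx i).val % 2 = 0 then _ else _) = _
    rw [if_pos (by simpa [evenIdx] using h2)]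
    congr 1
    exact Fin.ext (by simp only [evenIdx]; omega)
  have hfo : ∀ i : Fin m, f (oddIdx i) = p (ℓ i) := by
    intro i
    have h2 : ¬ ((2 * i.val + 1) % 2 = 0) := by omega
    show (if (oddIdx i).val % 2 = 0 then _ else _) = _
    rw [if_neg (by simpa [oddIdx] using h2)]
    congr 2
    exact Fin.ext (by simp only [oddIdx]; omega)
  have hℓne : ∀ i j, ℓ i ≠ p (ℓ j) := by
    intro i j h
    exact hpVmin (ℓ j) (hℓmem j) (h ▸ hℓmem i)
  have hpinj : Function.Injective p := fun x y h => by rw [← hpp x, h, hpp]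
  have hfinj : Function.Injective f := by
    intro j j' hjj
    obtain ⟨i, hi⟩ := idx_split j
    obtain ⟨i', hi'⟩ := idx_split j'
    rcases hi with rfl | rfl <;> rcases hi' with rfl | rfl
    · rw [hfe, hfe] at hjj; rw [hℓmono.injective hjj]
    · rw [hfe, hfo] at hjj; exact absurd hjj (hℓne i i')
    · rw [hfo, hfe] at hjj; exact absurd hjj.symm (hℓne i' i)
    · rw [hfo, hfo] at hjj; rw [hℓmono.injective (hpinj hjj)]
  set σ₀ : Equiv.Perm (Fin (2 * m)) :=
    Equiv.ofBijective f (Finite.injective_iff_bijective.mp hfinj) with hσ₀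
  have hσe : ∀ i, σ₀ (evenIdx i) = ℓ i := fun i => hfe i
  have hσo : ∀ i, σ₀ (oddIdx i) = p (ℓ i) := fun i => hfo i
  have hσ₀lt : ∀ i : Fin m, σ₀ (evenIdx i) < σ₀ (oddIdx i) := by
    intro i; rw [hσe, hσo]; exact (hmemVmin _).mp (hℓmem i)
  have hσ₀mono : StrictMono fun i : Fin m => σ₀ (evenIdx i) := by
    have hℓeq : (fun i : Fin m => σ₀ (evenIdx i)) = ℓ := funext fun i => hσe i
    rw [hℓeq]; exact hℓmono
  have hσ₀mem : σ₀ ∈ Finset.univ.filter (fun σ : Equiv.Perm (Fin (2 * m)) =>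
      (∀ i : Fin m, σ (evenIdx i) < σ (oddIdx i)) ∧
      StrictMono fun i : Fin m => σ (evenIdx i)) :=
    Finset.mem_filter.mpr ⟨Finset.mem_univ _, hσ₀lt, hσ₀mono⟩
  have hedg : ∀ i, edg σ₀ i = E (ℓ i) := by
    intro i
    rw [edg]
    rw [hσe, hσo]
    exact hps (ℓ i)
  have hedgM : ∀ i, edg σ₀ i ∈ M := fun i => (hedg i) ▸ hEM (ℓ i)
  have hMim : M = Finset.univ.image (edg σ₀) := by
    apply Finset.Subset.antisymm
    · intro e he
      have hv : (Quot.out e).1 ∈ e := Sym2.out_fst_mem e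
      set v := (Quot.out e).1 with hvdef
      have hEv' : e = E v := hEuniq v e he hv
      have hwex : ∃ w, w ∈ Vmin ∧ w ∈ e := by
        by_cases hvp : v < p v
        · exact ⟨v, (hmemVmin v).mpr hvp, hv⟩
        · refine ⟨p v, ?_, ?_⟩
          · rw [hmemVmin, hpp]
            exact (hcompl v).mp (fun hc => hvp ((hmemVmin v).mp hc))
          · rw [hEv']; exact hpv v
      obtain ⟨w, hwVmin, hwe⟩ := hwex
      obtain ⟨i, hi⟩ := hℓsurj w hwVmin
      have hee : edg σ₀ i = e := by
        rw [hedg, hi]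
        exact (hEuniq w e he hwe).symm
      rw [← hee]
      exact Finset.mem_image_of_mem _ (Finset.mem_univ i)
    · intro e he
      obtain ⟨i, _, rfl⟩ := Finset.mem_image.mp he
      exact hedgM i
  set S₀ : Finset (Fin m) := Finset.univ.filter (fun i => edg σ₀ i ∈ M₁) with hS₀def
  have hS₀card : S₀.card = k := by
    rw [← hcard]
    apply Finset.card_nbij (edg σ₀)
    · intro i hi
      exact (Finset.mem_filter.mp hi).2
    · exact fun x _ y _ h => edg_inj σ₀ h
    · intro e he
      have heM : e ∈ M := Finset.mem_union_right _ (Finset.mem_coe.mp he)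
      rw [hMim] at heM
      obtain ⟨i, _, rfl⟩ := Finset.mem_image.mp heM
      exact ⟨i, Finset.mem_coe.mpr
        (Finset.mem_filter.mpr ⟨Finset.mem_univ _, Finset.mem_coe.mp he⟩), rfl⟩
  have hS₀mem : S₀ ∈ Finset.powersetCard k Finset.univ :=
    Finset.mem_powersetCard_univ.mpr hS₀card
  have hS₀c : ∀ i, i ∉ S₀ → edg σ₀ i ∈ M₀ := by
    intro i hi
    rcases Finset.mem_union.mp (hedgM i) with h | h
    · exact h
    · exact absurd (show i ∈ S₀ from Finset.mem_filter.mpr ⟨Finset.mem_univ _, h⟩) hi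
  set g : Sym2 (Fin (2 * m)) ⊕ Sym2 (Fin (2 * m)) → F :=
    Sum.elim (fun e => if e ∈ M₀ then 1 else 0) (fun e => if e ∈ M₁ then 1 else 0) with hg
  set φ := MvPolynomial.aeval (R := F) g with hφ
  have hφa : ∀ (σ : Equiv.Perm (Fin (2 * m))) (i : Fin m), φ (aE F G₀ σ i) =
      if G₀.Adj (σ (evenIdx i)) (σ (oddIdx i)) ∧ edg σ i ∈ M₀ then 1 else 0 := by
    intro σ i
    rw [aE, apply_ite φ, map_zero, MvPolynomial.aeval_X]
    by_cases h : G₀.Adj (σ (evenIdx i)) (σ (oddIdx i)) <;>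
      by_cases h2 : edg σ i ∈ M₀ <;>
      simp [hg, h, h2]
  have hφb : ∀ (σ : Equiv.Perm (Fin (2 * m))) (i : Fin m), φ (bE F G₁ σ i) =
      if G₁.Adj (σ (evenIdx i)) (σ (oddIdx i)) ∧ edg σ i ∈ M₁ then 1 else 0 := by
    intro σ i
    rw [bE, apply_ite φ, map_zero, MvPolynomial.aeval_X]
    by_cases h : G₁.Adj (σ (evenIdx i)) (σ (oddIdx i)) <;>
      by_cases h2 : edg σ i ∈ M₁ <;>
      simp [hg, h, h2]
  have key : ∀ σ ∈ Finset.univ.filter (fun σ : Equiv.Perm (Fin (2 * m)) =>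
        (∀ i : Fin m, σ (evenIdx i) < σ (oddIdx i)) ∧
        StrictMono fun i : Fin m => σ (evenIdx i)),
      ∀ T ∈ Finset.powersetCard k Finset.univ,
      φ ((∏ i ∈ T, bE F G₁ σ i) * ∏ i ∈ Tᶜ, aE F G₀ σ i)
        = if σ = σ₀ ∧ T = S₀ then 1 else 0 := by
    intro σ hσ T _
    rw [map_mul, map_prod, map_prod]
    by_cases hcase : σ = σ₀ ∧ T = S₀
    · obtain ⟨rfl, rfl⟩ := hcase
      rw [if_pos ⟨rfl, rfl⟩]
      rw [Finset.prod_eq_one, Finset.prod_eq_one, mul_one]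
      · intro i hi
        rw [hφa]
        have h₀ := hS₀c i (Finset.mem_compl.mp hi)
        have hadj : G₀.Adj (σ₀ (evenIdx i)) (σ₀ (oddIdx i)) :=
          (SimpleGraph.mem_edgeSet _).mp (h0 (Finset.mem_coe.mpr h₀))
        rw [if_pos ⟨hadj, h₀⟩]
      · intro i hi
        rw [hφb]
        have h₁ := (Finset.mem_filter.mp hi).2
        have hadj : G₁.Adj (σ₀ (evenIdx i)) (σ₀ (oddIdx i)) :=
          (SimpleGraph.mem_edgeSet _).mp (h1 (Finset.mem_coe.mpr h₁))
        rw [if_pos ⟨hadj, h₁⟩]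
    · rw [if_neg hcase]
      by_contra hne
      have hprod := mul_ne_zero_iff.mp hne
      have hbfac : ∀ i ∈ T, G₁.Adj (σ (evenIdx i)) (σ (oddIdx i)) ∧ edg σ i ∈ M₁ := by
        intro i hi
        have hz := fun h => hprod.1 (Finset.prod_eq_zero hi h)
        rw [hφb] at hz
        by_contra hc
        exact hz (if_neg hc)
      have hafac : ∀ i ∈ Tᶜ, G₀.Adj (σ (evenIdx i)) (σ (oddIdx i)) ∧ edg σ i ∈ M₀ := by
        intro i hi
        have hz := fun h => hprod.2 (Finset.prod_eq_zero hi h)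
        rw [hφa] at hz
        by_contra hc
        exact hz (if_neg hc)
      have hedgM' : ∀ i, edg σ i ∈ M := by
        intro i
        by_cases hi : i ∈ T
        · exact Finset.mem_union_right _ (hbfac i hi).2
        · exact Finset.mem_union_left _ (hafac i (Finset.mem_compl.mpr hi)).2
      have hVm : (M.image emin).card = m := by
        rw [hMim, Finset.image_image]
        have hcomp : (emin ∘ edg σ₀) = fun i => σ₀ (evenIdx i) := funext fun i => by
          rw [Function.comp_apply, edg, emin_mk, min_eq_left (le_of_lt (hσ₀lt i))]
        rw [hcomp, Finset.card_image_of_injective _ hσ₀mono.injective, Finset.card_univ,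
          Fintype.card_fin]
      have hkey : ∀ σ' : Equiv.Perm (Fin (2 * m)),
          (∀ i : Fin m, σ' (evenIdx i) < σ' (oddIdx i)) →
          StrictMono (fun i : Fin m => σ' (evenIdx i)) → (∀ i, edg σ' i ∈ M) →
          (fun i : Fin m => σ' (evenIdx i)) = ⇑((M.image emin).orderEmbOfFin hVm) := by
        intro σ' hlt hmono hedgm
        apply Finset.orderEmbOfFin_unique hVm ?_ hmono
        intro i
        have hm' : σ' (evenIdx i) = emin (edg σ' i) := by
          rw [edg, emin_mk, min_eq_left (le_of_lt (hlt i))]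
        rw [hm']
        exact Finset.mem_image_of_mem _ (hedgm i)
      obtain ⟨-, hσlt, hσmono⟩ := Finset.mem_filter.mp hσ
      have heq : ∀ i : Fin m, σ (evenIdx i) = σ₀ (evenIdx i) := by
        have e1 := hkey σ hσlt hσmono hedgM'
        have e2 := hkey σ₀ hσ₀lt hσ₀mono hedgM
        intro i
        rw [congrFun e1 i, congrFun e2 i]
      have hedgeq : ∀ i, edg σ i = edg σ₀ i := by
        intro i
        refine huniq _ (hedgM' i) _ (hedgM i) (σ (evenIdx i)) ?_ ?_
        · rw [mem_edg]; exact Or.inl rfl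
        · rw [mem_edg, heq i]; exact Or.inl rfl
      have hodd : ∀ i, σ (oddIdx i) = σ₀ (oddIdx i) := by
        intro i
        have h' := hedgeq i
        rw [edg, edg, heq i] at h'
        exact Sym2.congr_right.mp h'
      have hσeq : σ = σ₀ := by
        apply Equiv.ext
        intro j
        obtain ⟨i, hi | hi⟩ := idx_split j
        · rw [hi]; exact heq i
        · rw [hi]; exact hodd i
      have hTeq : T = S₀ := by
        ext i
        constructor
        · intro hi
          exact Finset.mem_filter.mpr ⟨Finset.mem_univ _, by rw [← hσeq]; exact (hbfac i hi).2⟩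
        · intro hi
          by_contra hno
          have h₀' := (hafac i (Finset.mem_compl.mpr hno)).2
          have h₁' := (Finset.mem_filter.mp hi).2
          rw [← hσeq] at h₁'
          exact (Finset.disjoint_left.mp hdisj h₀') h₁'
      exact hcase ⟨hσeq, hTeq⟩
  have hval : φ ((pfaffian (weightedTutteMatrix F G₀ G₁)).coeff k)
      = ((Equiv.Perm.sign σ₀ : ℤ) : F) := by
    rw [coeff_pfaffian, map_sum]
    rw [Finset.sum_congr rfl (fun σ hσ => by
      rw [map_zsmul, map_sum, Finset.sum_congr rfl (fun T hT => key σ hσ T hT)])]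
    rw [Finset.sum_eq_single_of_mem σ₀ hσ₀mem]
    · rw [Finset.sum_eq_single_of_mem S₀ hS₀mem]
      · rw [if_pos ⟨rfl, rfl⟩]
        simp
      · intro T _ hT
        rw [if_neg (fun h => hT h.2)]
    · intro σ _ hσne
      rw [Finset.sum_eq_zero (fun T _ => if_neg (fun h => hσne h.1)), smul_zero]
  intro hzero
  rw [hzero, map_zero] at hval
  rcases Int.units_eq_one_or (Equiv.Perm.sign σ₀) with h | h <;> rw [h] at hval <;>
    simp at hval

end Aux

/-- For each `k = 0, 1, …, n/2`, the graph `G = G₀ + G₁` on `n = 2m` vertices has a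
perfect matching of weight exactly `k` if and only if the coefficient of `y^k` in
`pf T(G₀, G₁)` is not the zero polynomial in `F[X_E]`. -/
theorem exact_matching_iff_coeff_pfaffian_ne_zero (F : Type) [Field F] (m : ℕ)
    (hm : 0 < m) (G₀ G₁ : SimpleGraph (Fin (2 * m))) (k : ℕ) (hk : k ≤ m) :
    (∃ M₀ M₁, IsPerfectMatchingPairOfWeight G₀ G₁ M₀ M₁ k) ↔
      (pfaffian (weightedTutteMatrix F G₀ G₁)).coeff k ≠ 0 := by
  constructor
  · rintro ⟨M₀, M₁, hM⟩
    exact coeff_ne_zero_of_matching F G₀ G₁ hM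
  · intro hne
    rw [coeff_pfaffian] at hne
    obtain ⟨σ, hσ, hσne⟩ := Finset.exists_ne_zero_of_sum_ne_zero hne
    have hinner : (∑ T ∈ Finset.powersetCard k Finset.univ,
        (∏ i ∈ T, bE F G₁ σ i) * ∏ i ∈ Tᶜ, aE F G₀ σ i) ≠ 0 := by
      intro h
      rw [h, smul_zero] at hσne
      exact hσne rfl
    obtain ⟨T, hT, hTne⟩ := Finset.exists_ne_zero_of_sum_ne_zero hinner
    have hprod := mul_ne_zero_iff.mp hTne
    have hb : ∀ i ∈ T, G₁.Adj (σ (evenIdx i)) (σ (oddIdx i)) := by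
      intro i hi
      by_contra hadj
      exact hprod.1 (Finset.prod_eq_zero hi (by rw [bE, if_neg hadj]))
    have ha : ∀ i ∈ Tᶜ, G₀.Adj (σ (evenIdx i)) (σ (oddIdx i)) := by
      intro i hi
      by_contra hadj
      exact hprod.2 (Finset.prod_eq_zero hi (by rw [aE, if_neg hadj]))
    exact ⟨_, _, matching_of_adj G₀ G₁ (Finset.mem_powersetCard_univ.mp hT) ha hb⟩
end

section
/- Camerini–Galbiati–Maffioli weighted matrix formulation of linear matroid parity: let (Z, L₀, L₁) be a 0/1-weighted LMP instance with Z ∈ F^{V × U}, |V| = n even, and line set L = L₀ ⊔ L₁, and set Y(Z, L₀, L₁) := Y(Z, L₀) + y·Y(Z, L₁) over F[X_L, y]. Then, for each k = 0, 1, …, n/2, the instance has a parity base of weight exactly k if and only if the coefficient of y^k in pf Y(Z, L₀, L₁) is not the zero polynomial in F[X_L]. -/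
open scoped Classical

/-- The weighted Lovász matrix `Y(Z, L₀, L₁) = Y(Z, L₀) + y·Y(Z, L₁)` of a 0/1-weighted
LMP instance over `F[X_L][y]`: the columns of `Z` are indexed by `L × Bool`, the lines of
weight `1` form the subset `L₁ ⊆ L` (and `L₀ = L \ L₁`), `a ∧ b = abᵀ − baᵀ`, and
`y = Polynomial.X`. -/
noncomputable def weightedLovaszMatrix (F : Type) [Field F] {n : ℕ} {L : Type}
    [Fintype L] (Z : Matrix (Fin n) (L × Bool) F) (L₁ : Finset L) :
    Matrix (Fin n) (Fin n) (Polynomial (MvPolynomial L F)) :=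
  ∑ ℓ : L,
    ((if ℓ ∈ L₁ then Polynomial.X * Polynomial.C (MvPolynomial.X ℓ)
        else Polynomial.C (MvPolynomial.X ℓ)) : Polynomial (MvPolynomial L F)) •
      (Matrix.vecMulVec (fun i => Polynomial.C (MvPolynomial.C (Z i (ℓ, false))))
          (fun i => Polynomial.C (MvPolynomial.C (Z i (ℓ, true)))) -
        Matrix.vecMulVec (fun i => Polynomial.C (MvPolynomial.C (Z i (ℓ, true))))
          (fun i => Polynomial.C (MvPolynomial.C (Z i (ℓ, false)))))

theorem Equiv.Perm.inv_apply_self {α : Type*} (f : Equiv.Perm α) (x : α) : f⁻¹ (f x) = x :=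
  f.symm_apply_apply x

theorem Equiv.Perm.apply_inv_self {α : Type*} (f : Equiv.Perm α) (x : α) : f (f⁻¹ x) = x :=
  f.apply_symm_apply x

namespace CGM
open Equiv Finset

variable {m : ℕ}

/-- `Fin m × Bool ≃ Fin (2*m)`, `(i,false) ↦ 2i`, `(i,true) ↦ 2i+1`. -/
def pairEquiv (m : ℕ) : Fin m × Bool ≃ Fin (2 * m) where
  toFun p := if p.2 then oddIdx p.1 else evenIdx p.1
  invFun q := (⟨q.val / 2, by have := q.isLt; omega⟩, decide (q.val % 2 = 1))
  left_inv := by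
    rintro ⟨i, b⟩
    cases b <;> simp [evenIdx, oddIdx] <;>
      exact Fin.ext (by simp; omega)
  right_inv := by
    intro q
    rcases Nat.even_or_odd q.val with h | h
    · rw [Nat.even_iff] at h
      have h1 : ¬ (q.val % 2 = 1) := by omega
      simp only [h1]
      simp [evenIdx]
      exact Fin.ext (by simp; omega)
    · rw [Nat.odd_iff] at h
      simp [h, oddIdx]
      exact Fin.ext (by simp; omega)

@[simp] lemma pairEquiv_false (i : Fin m) : pairEquiv m (i, false) = evenIdx i := rfl
@[simp] lemma pairEquiv_true (i : Fin m) : pairEquiv m (i, true) = oddIdx i := rfl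
@[simp] lemma pairEquiv_symm_even (i : Fin m) : (pairEquiv m).symm (evenIdx i) = (i, false) :=
  (pairEquiv m).symm_apply_eq.mpr rfl
@[simp] lemma pairEquiv_symm_odd (i : Fin m) : (pairEquiv m).symm (oddIdx i) = (i, true) :=
  (pairEquiv m).symm_apply_eq.mpr rfl

lemma evenIdx_ne_oddIdx (i j : Fin m) : evenIdx i ≠ oddIdx j := by
  intro h
  have := congrArg Fin.val h
  simp [evenIdx, oddIdx] at this
  omega

lemma evenIdx_injective : Function.Injective (evenIdx (m := m)) := by
  intro i j h
  have := congrArg Fin.val h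
  simp [evenIdx] at this
  exact Fin.ext this


noncomputable section

/-- Swap within pair `i` whenever `s i = true`. -/
def swapS (s : Fin m → Bool) : Equiv.Perm (Fin (2 * m)) :=
  (pairEquiv m).permCongr
    (Equiv.prodCongrRight fun i => if s i then Equiv.swap false true else Equiv.refl Bool)

/-- Permute the pairs by `π`. -/
def rho (π : Equiv.Perm (Fin m)) : Equiv.Perm (Fin (2 * m)) :=
  (pairEquiv m).permCongr (Equiv.prodCongrLeft fun _ : Bool => π)

@[simp] lemma swapS_even (s : Fin m → Bool) (i : Fin m) :
    swapS s (evenIdx i) = if s i then oddIdx i else evenIdx i := by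
  simp only [swapS, Equiv.permCongr_apply, pairEquiv_symm_even, Equiv.prodCongrRight_apply]
  cases h : s i <;> simp [h]

@[simp] lemma swapS_odd (s : Fin m → Bool) (i : Fin m) :
    swapS s (oddIdx i) = if s i then evenIdx i else oddIdx i := by
  simp only [swapS, Equiv.permCongr_apply, pairEquiv_symm_odd, Equiv.prodCongrRight_apply]
  cases h : s i <;> simp [h, Equiv.swap_apply_of_ne_of_ne]

@[simp] lemma rho_even (π : Equiv.Perm (Fin m)) (i : Fin m) :
    rho π (evenIdx i) = evenIdx (π i) := by
  simp [rho, Equiv.permCongr_apply, Equiv.prodCongrLeft_apply]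

@[simp] lemma rho_odd (π : Equiv.Perm (Fin m)) (i : Fin m) :
    rho π (oddIdx i) = oddIdx (π i) := by
  simp [rho, Equiv.permCongr_apply, Equiv.prodCongrLeft_apply]

@[simp] lemma rho_inv_even (π : Equiv.Perm (Fin m)) (i : Fin m) :
    (rho π)⁻¹ (evenIdx i) = evenIdx (π⁻¹ i) := by
  have : rho π (evenIdx (π⁻¹ i)) = evenIdx i := by simp
  rw [← this, Equiv.Perm.inv_apply_self]

@[simp] lemma rho_inv_odd (π : Equiv.Perm (Fin m)) (i : Fin m) :
    (rho π)⁻¹ (oddIdx i) = oddIdx (π⁻¹ i) := by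
  have : rho π (oddIdx (π⁻¹ i)) = oddIdx i := by simp
  rw [← this, Equiv.Perm.inv_apply_self]

lemma swapS_mul_self (s : Fin m → Bool) : swapS s * swapS s = 1 := by
  ext q
  obtain ⟨⟨i, b⟩, rfl⟩ := (pairEquiv m).surjective q
  cases b <;> simp only [pairEquiv_false, pairEquiv_true, Equiv.Perm.mul_apply,
    Equiv.Perm.one_apply, swapS_even, swapS_odd] <;> cases h : s i <;> simp [h]

@[simp] lemma sign_rho (π : Equiv.Perm (Fin m)) : Equiv.Perm.sign (rho π) = 1 := by
  rw [rho, Equiv.Perm.sign_permCongr, Equiv.Perm.sign_prodCongrLeft]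
  simp [Int.units_mul_self]

@[simp] lemma sign_swapS (s : Fin m → Bool) :
    Equiv.Perm.sign (swapS s) = ∏ i : Fin m, (if s i then (-1 : ℤˣ) else 1) := by
  rw [swapS, Equiv.Perm.sign_permCongr, Equiv.Perm.sign_prodCongrRight]
  refine Finset.prod_congr rfl fun i _ => ?_
  cases h : s i <;> simp [h]


/-- The permutations appearing in the pfaffian. -/
def pfFilter (m : ℕ) : Finset (Equiv.Perm (Fin (2 * m))) :=
  Finset.univ.filter (fun σ : Equiv.Perm (Fin (2 * m)) =>
      (∀ i : Fin m, σ (evenIdx i) < σ (oddIdx i)) ∧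
      StrictMono fun i : Fin m => σ (evenIdx i))

lemma pfaffian_eq {R : Type} [CommRing R] (A : Matrix (Fin (2 * m)) (Fin (2 * m)) R) :
    pfaffian A = ∑ σ ∈ pfFilter m,
      (Equiv.Perm.sign σ : ℤ) • ∏ i : Fin m, A (σ (evenIdx i)) (σ (oddIdx i)) := rfl

variable {R : Type} [CommRing R] {L : Type} [Fintype L]

/-- The mixed pfaffian term attached to an assignment `g` of lines to pairs. -/
def tG (a b : L → Fin (2 * m) → R) (g : Fin m → L) : R :=
  ∑ σ ∈ pfFilter m, (Equiv.Perm.sign σ : ℤ) •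
    ∏ i : Fin m,
      (a (g i) (σ (evenIdx i)) * b (g i) (σ (oddIdx i)) -
        b (g i) (σ (evenIdx i)) * a (g i) (σ (oddIdx i)))

/-- The `2m × 2m` matrix whose `2i`-th column is `a (g i)` and `2i+1`-st column is `b (g i)`. -/
def Bmat (a b : L → Fin (2 * m) → R) (g : Fin m → L) :
    Matrix (Fin (2 * m)) (Fin (2 * m)) R :=
  Matrix.of fun p q =>
    if ((pairEquiv m).symm q).2 then b (g ((pairEquiv m).symm q).1) p
    else a (g ((pairEquiv m).symm q).1) p

@[simp] lemma Bmat_even (a b : L → Fin (2 * m) → R) (g : Fin m → L) (p : Fin (2 * m))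
    (i : Fin m) : Bmat a b g p (evenIdx i) = a (g i) p := by simp [Bmat]

@[simp] lemma Bmat_odd (a b : L → Fin (2 * m) → R) (g : Fin m → L) (p : Fin (2 * m))
    (i : Fin m) : Bmat a b g p (oddIdx i) = b (g i) p := by simp [Bmat]

lemma prod_split {R' : Type} [CommRing R'] (f : Fin (2 * m) → R') :
    ∏ q : Fin (2 * m), f q = ∏ i : Fin m, (f (evenIdx i) * f (oddIdx i)) := by
  rw [← Equiv.prod_comp (pairEquiv m) f, Fintype.prod_prod_type]
  refine Finset.prod_congr rfl fun i _ => ?_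
  rw [show ∏ y : Bool, f (pairEquiv m (i, y)) =
    f (pairEquiv m (i, true)) * f (pairEquiv m (i, false)) from Fintype.prod_bool _]
  simp [mul_comm]

lemma prod_sub_expand (x y : Fin m → R) :
    ∏ i : Fin m, (x i - y i) =
      ∑ s : Fin m → Bool, ∏ i : Fin m, (if s i then -(y i) else x i) := by
  have h1 : ∏ i : Fin m, (x i - y i) =
      ∏ i : Fin m, ∑ b : Bool, (if b then -(y i) else x i) := by
    refine Finset.prod_congr rfl fun i _ => ?_
    rw [show ∑ b : Bool, (if b then -(y i) else x i) = -(y i) + x i from Fintype.sum_bool _]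
    ring
  rw [h1, Fintype.prod_sum]

/-- Expansion of the pfaffian of a weighted sum of wedges over assignments. -/
theorem pfaffian_expand (c : L → R) (a b : L → Fin (2 * m) → R) :
    pfaffian (∑ ℓ : L, c ℓ •
        (Matrix.vecMulVec (a ℓ) (b ℓ) - Matrix.vecMulVec (b ℓ) (a ℓ))) =
      ∑ g : Fin m → L, (∏ i : Fin m, c (g i)) * tG a b g := by
  rw [pfaffian_eq]
  have hent : ∀ p q : Fin (2 * m),
      (∑ ℓ : L, c ℓ • (Matrix.vecMulVec (a ℓ) (b ℓ) - Matrix.vecMulVec (b ℓ) (a ℓ))) p q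
        = ∑ ℓ : L, c ℓ * (a ℓ p * b ℓ q - b ℓ p * a ℓ q) := by
    intro p q
    rw [Matrix.sum_apply]
    refine Finset.sum_congr rfl fun ℓ _ => ?_
    simp [Matrix.vecMulVec_apply, mul_sub]
  calc ∑ σ ∈ pfFilter m, (Equiv.Perm.sign σ : ℤ) • ∏ i : Fin m,
        (∑ ℓ : L, c ℓ • (Matrix.vecMulVec (a ℓ) (b ℓ) - Matrix.vecMulVec (b ℓ) (a ℓ)))
          (σ (evenIdx i)) (σ (oddIdx i))
      = ∑ σ ∈ pfFilter m, ∑ g : Fin m → L, (∏ i : Fin m, c (g i)) *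
          ((Equiv.Perm.sign σ : ℤ) • ∏ i : Fin m,
            (a (g i) (σ (evenIdx i)) * b (g i) (σ (oddIdx i)) -
              b (g i) (σ (evenIdx i)) * a (g i) (σ (oddIdx i)))) := by
        refine Finset.sum_congr rfl fun σ _ => ?_
        simp only [hent, smul_eq_mul]
        rw [Fintype.prod_sum (f := fun i ℓ => c ℓ *
          (a ℓ (σ (evenIdx i)) * b ℓ (σ (oddIdx i)) -
            b ℓ (σ (evenIdx i)) * a ℓ (σ (oddIdx i))))]
        rw [Finset.smul_sum]
        refine Finset.sum_congr rfl fun g _ => ?_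
        rw [Finset.prod_mul_distrib]
        exact (mul_smul_comm _ _ _).symm
    _ = ∑ g : Fin m → L, (∏ i : Fin m, c (g i)) * tG a b g := by
        rw [Finset.sum_comm]
        refine Finset.sum_congr rfl fun g _ => ?_
        rw [tG, Finset.mul_sum]

section Bij

/-- components of the decomposition of `τ` -/
def sDec (τ : Equiv.Perm (Fin (2 * m))) : Fin m → Bool :=
  fun i => decide (τ (oddIdx i) < τ (evenIdx i))

def tau1 (τ : Equiv.Perm (Fin (2 * m))) : Equiv.Perm (Fin (2 * m)) :=
  τ * swapS (sDec τ)

def piDec (τ : Equiv.Perm (Fin (2 * m))) : Equiv.Perm (Fin m) :=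
  Tuple.sort (fun i => tau1 τ (evenIdx i))

def sigDec (τ : Equiv.Perm (Fin (2 * m))) : Equiv.Perm (Fin (2 * m)) :=
  tau1 τ * rho (piDec τ)

lemma tau1_even (τ : Equiv.Perm (Fin (2 * m))) (i : Fin m) :
    tau1 τ (evenIdx i) = if sDec τ i then τ (oddIdx i) else τ (evenIdx i) := by
  rw [tau1, Equiv.Perm.mul_apply, swapS_even]
  split <;> rfl

lemma tau1_odd (τ : Equiv.Perm (Fin (2 * m))) (i : Fin m) :
    tau1 τ (oddIdx i) = if sDec τ i then τ (evenIdx i) else τ (oddIdx i) := by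
  rw [tau1, Equiv.Perm.mul_apply, swapS_odd]
  split <;> rfl

lemma tau1_lt (τ : Equiv.Perm (Fin (2 * m))) (i : Fin m) :
    tau1 τ (evenIdx i) < tau1 τ (oddIdx i) := by
  rw [tau1_even, tau1_odd]
  by_cases h : τ (oddIdx i) < τ (evenIdx i)
  · have hs : sDec τ i = true := by simp [sDec, h]
    simpa [hs] using h
  · have hs : sDec τ i = false := by simp [sDec, h]
    have hne : τ (evenIdx i) ≠ τ (oddIdx i) := fun hc =>
      evenIdx_ne_oddIdx i i (τ.injective hc)
    simp only [hs, if_false]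
    exact lt_of_le_of_ne (le_of_not_gt h) hne

lemma tau1_even_injective (τ : Equiv.Perm (Fin (2 * m))) :
    Function.Injective (fun i => tau1 τ (evenIdx i)) :=
  fun _ _ h => evenIdx_injective ((tau1 τ).injective h)

lemma sigDec_mem (τ : Equiv.Perm (Fin (2 * m))) : sigDec τ ∈ pfFilter m := by
  have he : ∀ i, sigDec τ (evenIdx i) = tau1 τ (evenIdx (piDec τ i)) := by
    intro i; rw [sigDec, Equiv.Perm.mul_apply, rho_even]
  have ho : ∀ i, sigDec τ (oddIdx i) = tau1 τ (oddIdx (piDec τ i)) := by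
    intro i; rw [sigDec, Equiv.Perm.mul_apply, rho_odd]
  rw [pfFilter, Finset.mem_filter]
  refine ⟨Finset.mem_univ _, fun i => ?_, ?_⟩
  · rw [he, ho]; exact tau1_lt τ _
  · have hmono : Monotone ((fun i => tau1 τ (evenIdx i)) ∘ (piDec τ)) :=
      Tuple.monotone_sort _
    have hinj : Function.Injective ((fun i => tau1 τ (evenIdx i)) ∘ (piDec τ)) :=
      (tau1_even_injective τ).comp (piDec τ).injective
    have := hmono.strictMono_of_injective hinj
    convert this using 2 with i
    rw [he]; rfl

lemma iDec_apply (τ : Equiv.Perm (Fin (2 * m))) :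
    sigDec τ * (rho (piDec τ))⁻¹ * swapS ((sDec τ ∘ piDec τ) ∘ ⇑(piDec τ)⁻¹) = τ := by
  have h1 : (sDec τ ∘ piDec τ) ∘ ⇑(piDec τ)⁻¹ = sDec τ := by
    funext i; simp [Function.comp, Equiv.Perm.apply_inv_self]
  rw [h1, sigDec, mul_inv_cancel_right, tau1, mul_assoc, swapS_mul_self, mul_one]


lemma mem_pfFilter {σ : Equiv.Perm (Fin (2 * m))} :
    σ ∈ pfFilter m ↔ (∀ i : Fin m, σ (evenIdx i) < σ (oddIdx i)) ∧
      StrictMono fun i : Fin m => σ (evenIdx i) := by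
  simp [pfFilter]

lemma tau_even (π : Equiv.Perm (Fin m)) (σ : Equiv.Perm (Fin (2 * m)))
    (s : Fin m → Bool) (i : Fin m) :
    (σ * (rho π)⁻¹ * swapS (s ∘ ⇑π⁻¹)) (evenIdx i) =
      σ (if s (π⁻¹ i) then oddIdx (π⁻¹ i) else evenIdx (π⁻¹ i)) := by
  rw [Equiv.Perm.mul_apply, Equiv.Perm.mul_apply, swapS_even]
  cases h : s (π⁻¹ i) <;> simp [h, Function.comp, -Equiv.Perm.coe_inv]

lemma tau_odd (π : Equiv.Perm (Fin m)) (σ : Equiv.Perm (Fin (2 * m)))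
    (s : Fin m → Bool) (i : Fin m) :
    (σ * (rho π)⁻¹ * swapS (s ∘ ⇑π⁻¹)) (oddIdx i) =
      σ (if s (π⁻¹ i) then evenIdx (π⁻¹ i) else oddIdx (π⁻¹ i)) := by
  rw [Equiv.Perm.mul_apply, Equiv.Perm.mul_apply, swapS_odd]
  cases h : s (π⁻¹ i) <;> simp [h, Function.comp, -Equiv.Perm.coe_inv]

lemma sDec_of (π : Equiv.Perm (Fin m)) (σ : Equiv.Perm (Fin (2 * m)))
    (s : Fin m → Bool) (hσ : σ ∈ pfFilter m) :
    sDec (σ * (rho π)⁻¹ * swapS (s ∘ ⇑π⁻¹)) = s ∘ ⇑π⁻¹ := by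
  obtain ⟨h1, -⟩ := mem_pfFilter.mp hσ
  funext i
  rw [sDec, tau_even, tau_odd]
  have hc : (s ∘ ⇑π⁻¹) i = s (π⁻¹ i) := rfl
  cases h : s (π⁻¹ i)
  · simp only [h, if_false, Bool.false_eq_true, hc]
    exact decide_eq_false (asymm (h1 (π⁻¹ i)))
  · simp only [h, if_true, hc]
    exact decide_eq_true (h1 (π⁻¹ i))

lemma tau1_of (π : Equiv.Perm (Fin m)) (σ : Equiv.Perm (Fin (2 * m)))
    (s : Fin m → Bool) (hσ : σ ∈ pfFilter m) :
    tau1 (σ * (rho π)⁻¹ * swapS (s ∘ ⇑π⁻¹)) = σ * (rho π)⁻¹ := by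
  rw [tau1, sDec_of π σ s hσ, mul_assoc, swapS_mul_self, mul_one]

lemma piDec_of (π : Equiv.Perm (Fin m)) (σ : Equiv.Perm (Fin (2 * m)))
    (s : Fin m → Bool) (hσ : σ ∈ pfFilter m) :
    piDec (σ * (rho π)⁻¹ * swapS (s ∘ ⇑π⁻¹)) = π := by
  obtain ⟨-, h2⟩ := mem_pfFilter.mp hσ
  rw [piDec, tau1_of π σ s hσ]
  have hf : ∀ i : Fin m, (σ * (rho π)⁻¹) (evenIdx i) = σ (evenIdx (π⁻¹ i)) := by
    intro i; rw [Equiv.Perm.mul_apply, rho_inv_even]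
  symm
  rw [Tuple.eq_sort_iff]
  constructor
  · intro i j hij
    simp only [Function.comp, hf, Equiv.Perm.inv_apply_self]
    exact (h2.monotone (by exact_mod_cast hij))
  · intro i j hij heq
    exfalso
    simp only [hf, Equiv.Perm.inv_apply_self] at heq
    exact absurd (evenIdx_injective (σ.injective heq)) (ne_of_lt hij)

lemma sigDec_of (π : Equiv.Perm (Fin m)) (σ : Equiv.Perm (Fin (2 * m)))
    (s : Fin m → Bool) (hσ : σ ∈ pfFilter m) :
    sigDec (σ * (rho π)⁻¹ * swapS (s ∘ ⇑π⁻¹)) = σ := by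
  rw [sigDec, tau1_of π σ s hσ, piDec_of π σ s hσ, inv_mul_cancel_right]


lemma sign_tau (π : Equiv.Perm (Fin m)) (σ : Equiv.Perm (Fin (2 * m))) (s : Fin m → Bool) :
    ((Equiv.Perm.sign (σ * (rho π)⁻¹ * swapS (s ∘ ⇑π⁻¹)) : ℤ) : ℤ) =
      (Equiv.Perm.sign σ : ℤ) * ∏ i : Fin m, (if s i then (-1 : ℤ) else 1) := by
  rw [map_mul, map_mul, map_inv, sign_rho, inv_one, mul_one, sign_swapS]
  push_cast
  congr 1
  have : ∀ i : Fin m, (((if (s ∘ ⇑π⁻¹) i then (-1 : ℤˣ) else 1) : ℤˣ) : ℤ) =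
      (if s (π⁻¹ i) then (-1 : ℤ) else 1) := by
    intro i; rcases h : s (π⁻¹ i) with - | - <;> simp [Function.comp, h, -Equiv.Perm.coe_inv]
  rw [Finset.prod_congr rfl (fun i _ => this i)]
  exact Equiv.prod_comp π⁻¹ (fun j => if s j then (-1 : ℤ) else 1)

lemma term_eq (a b : L → Fin (2 * m) → R) (g : Fin m → L) (π : Equiv.Perm (Fin m))
    (σ : Equiv.Perm (Fin (2 * m))) (s : Fin m → Bool) :
    ((Equiv.Perm.sign (σ * (rho π)⁻¹ * swapS (s ∘ ⇑π⁻¹)) : ℤ) : R) *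
        ∏ q : Fin (2 * m), Bmat a b g ((σ * (rho π)⁻¹ * swapS (s ∘ ⇑π⁻¹)) q) q =
      (Equiv.Perm.sign σ : ℤ) •
        ∏ i : Fin m,
          (if s i then -(b (g (π i)) (σ (evenIdx i)) * a (g (π i)) (σ (oddIdx i)))
            else a (g (π i)) (σ (evenIdx i)) * b (g (π i)) (σ (oddIdx i))) := by
  set τ := σ * (rho π)⁻¹ * swapS (s ∘ ⇑π⁻¹) with hτ
  have hprod : ∏ q : Fin (2 * m), Bmat a b g (τ q) q =
      ∏ i : Fin m, (a (g i) (τ (evenIdx i)) * b (g i) (τ (oddIdx i))) := by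
    rw [prod_split (fun q => Bmat a b g (τ q) q)]
    exact Finset.prod_congr rfl fun i _ => by rw [Bmat_even, Bmat_odd]
  have hfac : ∀ i : Fin m, a (g i) (τ (evenIdx i)) * b (g i) (τ (oddIdx i)) =
      (fun j => a (g j) (σ (if s (π⁻¹ j) then oddIdx (π⁻¹ j) else evenIdx (π⁻¹ j))) *
        b (g j) (σ (if s (π⁻¹ j) then evenIdx (π⁻¹ j) else oddIdx (π⁻¹ j)))) i := by
    intro i; rw [hτ, tau_even, tau_odd]
  have hre : ∏ q : Fin (2 * m), Bmat a b g (τ q) q =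
      ∏ j : Fin m, (a (g (π j)) (σ (if s j then oddIdx j else evenIdx j)) *
        b (g (π j)) (σ (if s j then evenIdx j else oddIdx j))) := by
    rw [hprod, Finset.prod_congr rfl (fun i _ => hfac i),
      ← Equiv.prod_comp π (fun i => a (g i)
        (σ (if s (π⁻¹ i) then oddIdx (π⁻¹ i) else evenIdx (π⁻¹ i))) *
        b (g i) (σ (if s (π⁻¹ i) then evenIdx (π⁻¹ i) else oddIdx (π⁻¹ i))))]
    exact Finset.prod_congr rfl fun j _ => by rw [Equiv.Perm.inv_apply_self]
  rw [hre, hτ, sign_tau, zsmul_eq_mul]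
  push_cast
  rw [mul_assoc, ← Finset.prod_mul_distrib]
  congr 1
  refine Finset.prod_congr rfl fun j _ => ?_
  rcases h : s j with - | -
  · simp only [h, Bool.false_eq_true, if_false]
    push_cast
    ring
  · simp only [h, if_true]
    push_cast
    ring

/-- The key identity: the symmetrized mixed pfaffian term is a determinant. -/
theorem sum_tG_comp_perm (a b : L → Fin (2 * m) → R) (g : Fin m → L) :
    ∑ π : Equiv.Perm (Fin m), tG a b (g ∘ π) = (Bmat a b g).det := by
  classical
  have lhs_eq : ∑ π : Equiv.Perm (Fin m), tG a b (g ∘ π) =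
      ∑ t ∈ (Finset.univ : Finset (Equiv.Perm (Fin m))) ×ˢ
          ((pfFilter m) ×ˢ (Finset.univ : Finset (Fin m → Bool))),
        (Equiv.Perm.sign t.2.1 : ℤ) •
          ∏ i : Fin m,
            (if t.2.2 i then
              -(b (g (t.1 i)) (t.2.1 (evenIdx i)) * a (g (t.1 i)) (t.2.1 (oddIdx i)))
            else a (g (t.1 i)) (t.2.1 (evenIdx i)) * b (g (t.1 i)) (t.2.1 (oddIdx i))) := by
    rw [Finset.sum_product]
    refine Finset.sum_congr rfl fun π _ => ?_
    rw [Finset.sum_product, tG]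
    refine Finset.sum_congr rfl fun σ _ => ?_
    rw [prod_sub_expand (fun i => a ((g ∘ π) i) (σ (evenIdx i)) * b ((g ∘ π) i) (σ (oddIdx i)))
      (fun i => b ((g ∘ π) i) (σ (evenIdx i)) * a ((g ∘ π) i) (σ (oddIdx i))),
      Finset.smul_sum]
    rfl
  rw [lhs_eq, Matrix.det_apply']
  refine Finset.sum_nbij' (fun t => t.2.1 * (rho t.1)⁻¹ * swapS (t.2.2 ∘ ⇑t.1⁻¹))
    (fun τ => (piDec τ, sigDec τ, sDec τ ∘ ⇑(piDec τ))) (fun t _ => Finset.mem_univ _)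
    (fun τ _ => ?_) (fun t ht => ?_) (fun τ _ => iDec_apply τ) (fun t ht => ?_)
  · simp only [Finset.mem_product, Finset.mem_univ, true_and, and_true]
    exact sigDec_mem τ
  · simp only [Finset.mem_product, Finset.mem_univ, true_and, and_true] at ht
    obtain ⟨π, σ, s⟩ := t
    simp only at ht ⊢
    have h1 := piDec_of π σ s ht
    have h2 := sigDec_of π σ s ht
    have h3 := sDec_of π σ s ht
    rw [h1, h2, h3]
    refine Prod.ext rfl (Prod.ext rfl ?_)
    funext i
    simp [Function.comp]
  · obtain ⟨π, σ, s⟩ := t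
    exact (term_eq a b g π σ s).symm

end Bij

section Transfer

lemma tG_map {R' : Type} [CommRing R'] (φ : R →+* R') (a b : L → Fin (2 * m) → R)
    (g : Fin m → L) :
    φ (tG a b g) = tG (fun ℓ i => φ (a ℓ i)) (fun ℓ i => φ (b ℓ i)) g := by
  rw [tG, map_sum]
  refine Finset.sum_congr rfl fun σ _ => ?_
  rw [map_zsmul, map_prod]
  congr 1
  refine Finset.prod_congr rfl fun i _ => ?_
  rw [map_sub, map_mul, map_mul]

end Transfer

section Multiset

/-- The exponent vector of an assignment `g`. -/
def dF (g : Fin m → L) : L →₀ ℕ := ∑ i : Fin m, Finsupp.single (g i) 1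

lemma dF_apply (g : Fin m → L) (ℓ : L) :
    dF g ℓ = (Finset.univ.filter fun i => g i = ℓ).card := by
  rw [dF, Finsupp.finset_sum_apply, Finset.card_filter]
  refine Finset.sum_congr rfl fun i _ => ?_
  rw [Finsupp.single_apply]

lemma dF_comp_perm (g : Fin m → L) (π : Equiv.Perm (Fin m)) : dF (g ∘ π) = dF g := by
  rw [dF, dF]
  exact Equiv.sum_comp π (fun i => Finsupp.single (g i) 1)

lemma exists_comp_perm_of_dF_eq {g h : Fin m → L} (hd : dF g = dF h) :
    ∃ π : Equiv.Perm (Fin m), g = h ∘ π := by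
  have hcard : ∀ ℓ : L, Fintype.card {i // g i = ℓ} = Fintype.card {i // h i = ℓ} := by
    intro ℓ
    rw [Fintype.card_subtype, Fintype.card_subtype, ← dF_apply, ← dF_apply, hd]
  have fibEquiv : ∀ ℓ : L, {i // g i = ℓ} ≃ {i // h i = ℓ} := fun ℓ =>
    Fintype.equivOfCardEq (hcard ℓ)
  refine ⟨((Equiv.sigmaFiberEquiv g).symm.trans
    ((Equiv.sigmaCongrRight fibEquiv).trans (Equiv.sigmaFiberEquiv h))), ?_⟩
  funext i
  simp only [Function.comp_apply, Equiv.trans_apply, Equiv.sigmaFiberEquiv,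
    Equiv.sigmaCongrRight, Equiv.coe_fn_symm_mk, Equiv.coe_fn_mk]
  exact ((fibEquiv (g i)) ⟨i, rfl⟩).2.symm

/-- The weight of an assignment. -/
def wg (L₁ : Finset L) (g : Fin m → L) : ℕ := (Finset.univ.filter fun i => g i ∈ L₁).card

lemma wg_comp_perm (L₁ : Finset L) (g : Fin m → L) (π : Equiv.Perm (Fin m)) :
    wg L₁ (g ∘ π) = wg L₁ g := by
  rw [wg, wg]
  refine Finset.card_nbij π (fun i hi => ?_) (π.injective.injOn) (fun i hi => ?_)
  · simp only [Finset.coe_filter, Finset.mem_univ, true_and, Set.mem_setOf_eq] at hi ⊢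
    exact hi
  · simp only [Finset.coe_filter, Finset.mem_univ, true_and, Set.mem_image,
      Set.mem_setOf_eq] at hi ⊢
    exact ⟨π⁻¹ i, by simpa using hi, by simp⟩

lemma wg_eq_of_dF_eq {L₁ : Finset L} {g h : Fin m → L} (hd : dF g = dF h) :
    wg L₁ g = wg L₁ h := by
  obtain ⟨π, rfl⟩ := exists_comp_perm_of_dF_eq hd
  exact wg_comp_perm L₁ h π

end Multiset

section Vanish

lemma card_stab_filter (g₀ : Fin m → L) {g : Fin m → L} (π₀ : Equiv.Perm (Fin m))
    (hπ₀ : g₀ ∘ π₀ = g) :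
    (Finset.univ.filter fun π : Equiv.Perm (Fin m) => g₀ ∘ π = g).card =
      (Finset.univ.filter fun π : Equiv.Perm (Fin m) => g₀ ∘ π = g₀).card := by
  refine Finset.card_bij' (fun π _ => π * π₀⁻¹) (fun ς _ => ς * π₀) ?_ ?_ ?_ ?_
  · intro π hπ
    simp only [Finset.mem_filter, Finset.mem_univ, true_and] at hπ ⊢
    funext i
    have := congrFun hπ (π₀⁻¹ i)
    have h2 := congrFun hπ₀ (π₀⁻¹ i)
    simp only [Function.comp_apply, Equiv.Perm.coe_mul] at this h2 ⊢
    rw [this, ← h2, Equiv.Perm.apply_inv_self]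
  · intro ς hς
    simp only [Finset.mem_filter, Finset.mem_univ, true_and] at hς ⊢
    funext i
    have := congrFun hς (π₀ i)
    have h2 := congrFun hπ₀ i
    simp only [Function.comp_apply, Equiv.Perm.coe_mul] at this h2 ⊢
    rw [this, h2]
  · intro π _; simp [mul_assoc]
  · intro ς _; simp [mul_assoc]

lemma smul_sum_filter_tG (a b : L → Fin (2 * m) → R) (g₀ : Fin m → L) :
    (Finset.univ.filter fun π : Equiv.Perm (Fin m) => g₀ ∘ π = g₀).card •
        (∑ g ∈ Finset.univ.filter (fun g : Fin m → L => dF g = dF g₀), tG a b g) =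
      (Bmat a b g₀).det := by
  rw [← sum_tG_comp_perm a b g₀]
  rw [Finset.sum_comp (tG a b) (fun π : Equiv.Perm (Fin m) => g₀ ∘ π)]
  have himg : (Finset.univ : Finset (Equiv.Perm (Fin m))).image
      (fun π : Equiv.Perm (Fin m) => g₀ ∘ π) =
      Finset.univ.filter (fun g : Fin m → L => dF g = dF g₀) := by
    ext g
    simp only [Finset.mem_image, Finset.mem_filter, Finset.mem_univ, true_and]
    constructor
    · rintro ⟨π, -, rfl⟩
      exact dF_comp_perm g₀ π
    · intro hd
      obtain ⟨π, rfl⟩ := exists_comp_perm_of_dF_eq hd.symm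
      exact ⟨π⁻¹, by funext i; simp⟩
  rw [himg, Finset.smul_sum]
  refine Finset.sum_congr rfl fun g hg => ?_
  simp only [Finset.mem_filter, Finset.mem_univ, true_and] at hg
  obtain ⟨π₀, hπ₀⟩ := exists_comp_perm_of_dF_eq hg.symm
  congr 1
  exact (card_stab_filter g₀ π₀⁻¹ (by funext i; rw [hπ₀]; simp)).symm

lemma det_Bmat_eq_zero_of_not_injective (a b : L → Fin (2 * m) → R) {g₀ : Fin m → L}
    (hg : ¬ Function.Injective g₀) : (Bmat a b g₀).det = 0 := by
  rw [Function.not_injective_iff] at hg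
  obtain ⟨i, j, hij, hne⟩ := hg
  refine Matrix.det_zero_of_column_eq (i := evenIdx i) (j := evenIdx j)
    (fun h => hne (evenIdx_injective h)) (fun k => ?_)
  rw [Bmat_even, Bmat_even, hij]

/-- Vanishing at non-squarefree monomials, by a generic (characteristic-free) argument. -/
lemma sum_filter_tG_eq_zero (a b : L → Fin (2 * m) → R) {g₀ : Fin m → L}
    (hg : ¬ Function.Injective g₀) :
    ∑ g ∈ Finset.univ.filter (fun g : Fin m → L => dF g = dF g₀), tG a b g = 0 := by
  classical
  set P := MvPolynomial (L × Bool × Fin (2 * m)) ℤ with hP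
  set aP : L → Fin (2 * m) → P := fun ℓ i => MvPolynomial.X (ℓ, false, i) with haP
  set bP : L → Fin (2 * m) → P := fun ℓ i => MvPolynomial.X (ℓ, true, i) with hbP
  have hzero : ∑ g ∈ Finset.univ.filter (fun g : Fin m → L => dF g = dF g₀),
      tG aP bP g = 0 := by
    have h1 := smul_sum_filter_tG aP bP g₀
    rw [det_Bmat_eq_zero_of_not_injective aP bP hg] at h1
    have hc : (Finset.univ.filter fun π : Equiv.Perm (Fin m) => g₀ ∘ π = g₀).card ≠ 0 := by
      refine Finset.card_ne_zero_of_mem (a := 1) ?_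
      simp
    set T := ∑ g ∈ Finset.univ.filter (fun g : Fin m → L => dF g = dF g₀), tG aP bP g
    rw [nsmul_eq_mul] at h1
    rcases mul_eq_zero.mp h1 with h | h
    · exact absurd (Nat.cast_eq_zero.mp h) hc
    · exact h
  have hφ := congrArg (MvPolynomial.eval₂Hom (Int.castRingHom R)
    (fun v : L × Bool × Fin (2 * m) => if v.2.1 then b v.1 v.2.2 else a v.1 v.2.2)) hzero
  rw [map_sum, map_zero] at hφ
  rw [← hφ]
  refine Finset.sum_congr rfl fun g _ => ?_
  set φ := MvPolynomial.eval₂Hom (Int.castRingHom R)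
    (fun v : L × Bool × Fin (2 * m) => if v.2.1 then b v.1 v.2.2 else a v.1 v.2.2) with hφdef
  have ha : (fun ℓ i => φ (aP ℓ i)) = a := by
    funext ℓ i
    simp [haP, hφdef]
  have hb : (fun ℓ i => φ (bP ℓ i)) = b := by
    funext ℓ i
    simp [hbP, hφdef]
  rw [tG_map φ aP bP g, ha, hb]

end Vanish

section Inj

lemma sum_filter_tG_of_injective (a b : L → Fin (2 * m) → R) {g₀ : Fin m → L}
    (hg : Function.Injective g₀) :
    ∑ g ∈ Finset.univ.filter (fun g : Fin m → L => dF g = dF g₀), tG a b g =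
      (Bmat a b g₀).det := by
  rw [← sum_tG_comp_perm a b g₀]
  symm
  refine Finset.sum_bij (fun (π : Equiv.Perm (Fin m)) _ => g₀ ∘ π) ?_ ?_ ?_ ?_
  · intro π _
    simp only [Finset.mem_filter, Finset.mem_univ, true_and]
    exact dF_comp_perm g₀ π
  · intro π _ π' _ h
    exact Equiv.ext fun i => hg (congrFun h i)
  · intro g hgmem
    simp only [Finset.mem_filter, Finset.mem_univ, true_and] at hgmem
    obtain ⟨π, rfl⟩ := exists_comp_perm_of_dF_eq hgmem
    exact ⟨π, Finset.mem_univ _, rfl⟩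
  · intro π _
    rfl

lemma prod_X_eq_monomial (g : Fin m → L) :
    (∏ i : Fin m, (MvPolynomial.X (g i) : MvPolynomial L R)) =
      MvPolynomial.monomial (dF g) 1 := by
  have key : ∀ s : Finset (Fin m),
      (∏ i ∈ s, (MvPolynomial.X (g i) : MvPolynomial L R)) =
        MvPolynomial.monomial (∑ i ∈ s, Finsupp.single (g i) 1) 1 := by
    intro s
    induction s using Finset.induction with
    | empty => simp [MvPolynomial.monomial_zero']
    | insert _ _ h ih =>
      rw [Finset.prod_insert h, Finset.sum_insert h, ih, ← pow_one
        (MvPolynomial.X (g _) : MvPolynomial L R), MvPolynomial.X_pow_eq_monomial,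
        MvPolynomial.monomial_mul, one_mul]
  rw [key Finset.univ, dF]

end Inj

section Coeff

variable {F : Type} [Field F]

/-- The coefficient of `y^k` in the pfaffian of the weighted Lovász matrix. -/
lemma coeff_pfaffian_eq (Z : Matrix (Fin (2 * m)) (L × Bool) F) (L₁ : Finset L) (k : ℕ) :
    (pfaffian (weightedLovaszMatrix F Z L₁)).coeff k =
      ∑ g : Fin m → L, if wg L₁ g = k then
        MvPolynomial.monomial (dF g)
          (tG (fun ℓ i => Z i (ℓ, false)) (fun ℓ i => Z i (ℓ, true)) g) else 0 := by
  classical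
  set aF : L → Fin (2 * m) → F := fun ℓ i => Z i (ℓ, false) with haF
  set bF : L → Fin (2 * m) → F := fun ℓ i => Z i (ℓ, true) with hbF
  set S := Polynomial (MvPolynomial L F) with hS
  set cS : L → S := fun ℓ => if ℓ ∈ L₁ then Polynomial.X * Polynomial.C (MvPolynomial.X ℓ)
    else Polynomial.C (MvPolynomial.X ℓ) with hcS
  set aS : L → Fin (2 * m) → S := fun ℓ i => Polynomial.C (MvPolynomial.C (aF ℓ i)) with haS
  set bS : L → Fin (2 * m) → S := fun ℓ i => Polynomial.C (MvPolynomial.C (bF ℓ i)) with hbS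
  have hM : weightedLovaszMatrix F Z L₁ = ∑ ℓ : L, cS ℓ •
      (Matrix.vecMulVec (aS ℓ) (bS ℓ) - Matrix.vecMulVec (bS ℓ) (aS ℓ)) := rfl
  rw [hM, pfaffian_expand, Polynomial.finset_sum_coeff]
  refine Finset.sum_congr rfl fun g _ => ?_
  set φ : F →+* MvPolynomial L F := (MvPolynomial.C : F →+* MvPolynomial L F) with hφ
  set ψ : MvPolynomial L F →+* S := (Polynomial.C : MvPolynomial L F →+* S) with hψ
  have h2 : tG aS bS g = Polynomial.C (MvPolynomial.C (tG aF bF g)) := by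
    have := tG_map (ψ.comp φ) aF bF g
    simp only [RingHom.comp_apply] at this
    exact this.symm
  have h1 : ∏ i : Fin m, cS (g i) =
      Polynomial.C (MvPolynomial.monomial (dF g) 1) * Polynomial.X ^ (wg L₁ g) := by
    have step1 : ∏ i : Fin m, cS (g i) =
        ∏ i : Fin m, ((if g i ∈ L₁ then (Polynomial.X : S) else 1) *
          Polynomial.C (MvPolynomial.X (g i))) := by
      refine Finset.prod_congr rfl fun i _ => ?_
      rw [hcS]
      by_cases h : g i ∈ L₁ <;> simp [h, hψ]
    rw [step1, Finset.prod_mul_distrib, ← map_prod, prod_X_eq_monomial]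
    have step2 : (∏ i : Fin m, if g i ∈ L₁ then (Polynomial.X : S) else 1) =
        Polynomial.X ^ wg L₁ g := by
      rw [← Finset.prod_filter_mul_prod_filter_not Finset.univ (fun i => g i ∈ L₁),
        Finset.prod_congr rfl (fun i hi => if_pos (Finset.mem_filter.mp hi).2),
        Finset.prod_const,
        Finset.prod_congr rfl (fun i hi => if_neg (Finset.mem_filter.mp hi).2),
        Finset.prod_const_one, mul_one, wg]
    rw [step2, mul_comm]
  rw [h1, h2]
  have h3 : Polynomial.C (MvPolynomial.monomial (dF g) 1) * Polynomial.X ^ wg L₁ g *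
      Polynomial.C (MvPolynomial.C (tG aF bF g)) =
      Polynomial.C (MvPolynomial.monomial (dF g) (tG aF bF g)) * Polynomial.X ^ wg L₁ g := by
    rw [mul_assoc, mul_comm (Polynomial.X ^ wg L₁ g), ← mul_assoc, ← map_mul,
      mul_comm (MvPolynomial.monomial (dF g) 1), MvPolynomial.C_mul_monomial, mul_one]
  rw [h3, Polynomial.coeff_C_mul_X_pow]
  rcases eq_or_ne (wg L₁ g) k with h | h
  · simp [h]
  · simp [h, Ne.symm h]

end Coeff

section Wset

/-- The parity set associated with an assignment of lines. -/
def Wset (g₁ : Fin m → L) : Finset (L × Bool) :=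
  (Finset.univ.image g₁) ×ˢ (Finset.univ : Finset Bool)

lemma Wset_filter_card (g₁ : Fin m → L) (ℓ : L) :
    ((Wset g₁).filter (fun p => p.1 = ℓ)).card =
      if ℓ ∈ Finset.univ.image g₁ then 2 else 0 := by
  by_cases h : ℓ ∈ Finset.univ.image g₁
  · rw [if_pos h]
    have heq : (Wset g₁).filter (fun p => p.1 = ℓ) =
        ({ℓ} : Finset L) ×ˢ (Finset.univ : Finset Bool) := by
      ext p
      simp only [Wset, Finset.mem_filter, Finset.mem_product, Finset.mem_univ, and_true,
        Finset.mem_singleton]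
      constructor
      · rintro ⟨-, h2⟩; exact h2
      · rintro h2; exact ⟨h2 ▸ h, h2⟩
    rw [heq, Finset.card_product, Finset.card_singleton]
    simp
  · rw [if_neg h, Finset.card_eq_zero, Finset.filter_eq_empty_iff]
    rintro p hp
    simp only [Wset, Finset.mem_product, Finset.mem_univ, and_true] at hp
    intro hc
    exact h (hc ▸ hp)

lemma Wset_card {g₁ : Fin m → L} (hg : Function.Injective g₁) :
    (Wset g₁).card = 2 * m := by
  rw [Wset, Finset.card_product, Finset.card_image_of_injective _ hg]
  simp [mul_comm]

lemma Wset_weight (L₁ : Finset L) {g₁ : Fin m → L} (hg : Function.Injective g₁) :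
    (Finset.univ.filter fun ℓ : L =>
      ((Wset g₁).filter fun p => p.1 = ℓ).card = 2 ∧ ℓ ∈ L₁).card = wg L₁ g₁ := by
  rw [wg]
  symm
  refine Finset.card_bij (fun i _ => g₁ i) ?_ ?_ ?_
  · intro i hi
    simp only [Finset.mem_filter, Finset.mem_univ, true_and] at hi ⊢
    refine ⟨?_, hi⟩
    rw [Wset_filter_card, if_pos (Finset.mem_image.mpr ⟨i, Finset.mem_univ _, rfl⟩)]
  · intro i _ j _ h
    exact hg h
  · intro ℓ hℓ
    simp only [Finset.mem_filter, Finset.mem_univ, true_and] at hℓ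
    obtain ⟨h2, hL⟩ := hℓ
    rw [Wset_filter_card] at h2
    by_cases h : ℓ ∈ Finset.univ.image g₁
    · obtain ⟨i, -, rfl⟩ := Finset.mem_image.mp h
      exact ⟨i, by simp [hL], rfl⟩
    · rw [if_neg h] at h2; omega

variable {F : Type} [Field F]

lemma li_iff_det (Z : Matrix (Fin (2 * m)) (L × Bool) F) {g₁ : Fin m → L}
    (hg : Function.Injective g₁) :
    LinearIndependent F (fun p : (Wset g₁ : Finset (L × Bool)) => fun i => Z i (p : L × Bool))
      ↔ (Bmat (fun ℓ i => Z i (ℓ, false)) (fun ℓ i => Z i (ℓ, true)) g₁).det ≠ 0 := by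
  classical
  have hmem : ∀ q : Fin (2 * m),
      (g₁ ((pairEquiv m).symm q).1, ((pairEquiv m).symm q).2) ∈ Wset g₁ := by
    intro q
    simp only [Wset, Finset.mem_product, Finset.mem_univ, and_true]
    exact Finset.mem_image.mpr ⟨_, Finset.mem_univ _, rfl⟩
  set f : Fin (2 * m) → {p // p ∈ Wset g₁} := fun q => ⟨_, hmem q⟩ with hf
  have hinj : Function.Injective f := by
    intro q q' h
    have h1 := congrArg (fun p : {p // p ∈ Wset g₁} => (p : L × Bool).1) h
    have h2 := congrArg (fun p : {p // p ∈ Wset g₁} => (p : L × Bool).2) h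
    simp only [hf] at h1 h2
    have h3 : ((pairEquiv m).symm q).1 = ((pairEquiv m).symm q').1 := hg h1
    have : (pairEquiv m).symm q = (pairEquiv m).symm q' := Prod.ext h3 h2
    exact (pairEquiv m).symm.injective this
  have hbij : Function.Bijective f := by
    refine (Fintype.bijective_iff_injective_and_card f).mpr ⟨hinj, ?_⟩
    rw [Fintype.card_coe, Wset_card hg, Fintype.card_fin]
  have hcol : (fun p : {p // p ∈ Wset g₁} => fun i => Z i (p : L × Bool)) ∘
      (Equiv.ofBijective f hbij) =
      fun q => (Bmat (fun ℓ i => Z i (ℓ, false)) (fun ℓ i => Z i (ℓ, true)) g₁).transpose q := by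
    funext q
    funext p
    simp only [Function.comp_apply, Equiv.ofBijective_apply, hf, Matrix.transpose_apply]
    rcases hb : ((pairEquiv m).symm q).2 with - | -
    · simp [Bmat, hb]
    · simp [Bmat, hb]
  rw [← linearIndependent_equiv (Equiv.ofBijective f hbij), hcol]
  exact Matrix.linearIndependent_cols_iff_isUnit.trans
    (by rw [Matrix.isUnit_iff_isUnit_det, isUnit_iff_ne_zero])

end Wset

section Final

variable {F : Type} [Field F]

lemma coeff_coeff_eq (Z : Matrix (Fin (2 * m)) (L × Bool) F) (L₁ : Finset L) (k : ℕ)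
    (d : L →₀ ℕ) :
    MvPolynomial.coeff d ((pfaffian (weightedLovaszMatrix F Z L₁)).coeff k) =
      ∑ g ∈ Finset.univ.filter (fun g : Fin m → L => wg L₁ g = k ∧ dF g = d),
        tG (fun ℓ i => Z i (ℓ, false)) (fun ℓ i => Z i (ℓ, true)) g := by
  classical
  rw [coeff_pfaffian_eq, MvPolynomial.coeff_sum, Finset.sum_filter]
  refine Finset.sum_congr rfl fun g _ => ?_
  by_cases h1 : wg L₁ g = k
  · by_cases h2 : dF g = d
    · simp [h1, h2, MvPolynomial.coeff_monomial]
    · simp [h1, h2, MvPolynomial.coeff_monomial]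
  · simp [h1]

lemma filter_weight_dF (L₁ : Finset L) (k : ℕ) {g₁ : Fin m → L} (hk : wg L₁ g₁ = k) :
    Finset.univ.filter (fun g : Fin m → L => wg L₁ g = k ∧ dF g = dF g₁) =
      Finset.univ.filter (fun g : Fin m → L => dF g = dF g₁) := by
  ext g
  simp only [Finset.mem_filter, Finset.mem_univ, true_and, and_iff_right_iff_imp]
  intro hd
  rw [wg_eq_of_dF_eq hd, hk]

/-- Core two-way statement. -/
lemma coeff_ne_zero_iff (Z : Matrix (Fin (2 * m)) (L × Bool) F) (L₁ : Finset L) (k : ℕ) :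
    (∃ g₁ : Fin m → L, Function.Injective g₁ ∧ wg L₁ g₁ = k ∧
        (Bmat (fun ℓ i => Z i (ℓ, false)) (fun ℓ i => Z i (ℓ, true)) g₁).det ≠ 0) ↔
      (pfaffian (weightedLovaszMatrix F Z L₁)).coeff k ≠ 0 := by
  classical
  constructor
  · rintro ⟨g₁, hinj, hw, hdet⟩
    rw [MvPolynomial.ne_zero_iff]
    refine ⟨dF g₁, ?_⟩
    rw [coeff_coeff_eq, filter_weight_dF L₁ k hw,
      sum_filter_tG_of_injective _ _ hinj]
    exact hdet
  · intro hne
    obtain ⟨d, hd⟩ := MvPolynomial.ne_zero_iff.mp hne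
    rw [coeff_coeff_eq] at hd
    obtain ⟨g₁, hg₁mem, -⟩ := Finset.exists_ne_zero_of_sum_ne_zero hd
    simp only [Finset.mem_filter, Finset.mem_univ, true_and] at hg₁mem
    obtain ⟨hw, hdF⟩ := hg₁mem
    subst hdF
    rw [filter_weight_dF L₁ k hw] at hd
    have hinj : Function.Injective g₁ := by
      by_contra hni
      rw [sum_filter_tG_eq_zero _ _ hni] at hd
      exact hd rfl
    rw [sum_filter_tG_of_injective _ _ hinj] at hd
    exact ⟨g₁, hinj, hw, hd⟩

end Final
end
end CGM


/-- Camerini–Galbiati–Maffioli: for each `k = 0, 1, …, n/2` (`n = 2m`), a 0/1-weighted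
LMP instance `(Z, L₀, L₁)` has a parity base of weight exactly `k` (a parity set
`W ⊆ U = L × Bool` of size `n` with linearly independent columns such that exactly `k` of
its lines lie in `L₁`) if and only if the coefficient of `y^k` in `pf Y(Z, L₀, L₁)` is
not the zero polynomial in `F[X_L]`. -/
theorem weighted_lovasz_parity_base_iff_coeff_pfaffian_ne_zero (F : Type) [Field F]
    (m : ℕ) (hm : 0 < m) (L : Type) [Fintype L]
    (Z : Matrix (Fin (2 * m)) (L × Bool) F) (L₁ : Finset L) (k : ℕ) (hk : k ≤ m) :
    (∃ W : Finset (L × Bool),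
        (∀ ℓ : L, (W.filter fun p => p.1 = ℓ).card = 0 ∨
          (W.filter fun p => p.1 = ℓ).card = 2) ∧
        W.card = 2 * m ∧
        LinearIndependent F (fun p : W => fun i => Z i (p : L × Bool)) ∧
        (Finset.univ.filter fun ℓ : L =>
          (W.filter fun p => p.1 = ℓ).card = 2 ∧ ℓ ∈ L₁).card = k) ↔
      (pfaffian (weightedLovaszMatrix F Z L₁)).coeff k ≠ 0 := by
  classical
  rw [← CGM.coeff_ne_zero_iff Z L₁ k]
  constructor
  · rintro ⟨W, hW0, hWcard, hWli, hWk⟩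
    set S := Finset.univ.filter (fun ℓ : L => (W.filter fun p => p.1 = ℓ).card = 2) with hSdef
    have hsum : W.card = ∑ ℓ : L, (W.filter fun p => p.1 = ℓ).card :=
      Finset.card_eq_sum_card_fiberwise (fun p _ => Finset.mem_univ p.1)
    have hite : ∀ ℓ : L, (W.filter fun p => p.1 = ℓ).card = if ℓ ∈ S then 2 else 0 := by
      intro ℓ
      by_cases h : ℓ ∈ S
      · rw [if_pos h]; exact (Finset.mem_filter.mp h).2
      · rw [if_neg h]
        rcases hW0 ℓ with h0 | h2
        · exact h0
        · have : ℓ ∈ S := by rw [hSdef]; exact Finset.mem_filter.mpr ⟨Finset.mem_univ ℓ, h2⟩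
          exact absurd this h
    have hsum2 : ∑ ℓ : L, (W.filter fun p => p.1 = ℓ).card = 2 * S.card := by
      rw [Finset.sum_congr rfl (fun ℓ _ => hite ℓ), Finset.sum_ite_mem, Finset.univ_inter,
        Finset.sum_const, smul_eq_mul, mul_comm]
    have hScard : S.card = m := by omega
    have hcard' : Fintype.card {ℓ // ℓ ∈ S} = m := by rw [Fintype.card_coe, hScard]
    set e := Fintype.equivFinOfCardEq hcard' with he
    set g₁ : Fin m → L := fun i => (e.symm i : L) with hg₁
    have hinj : Function.Injective g₁ := fun i j h =>
      e.symm.injective (Subtype.ext h)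
    have himg : Finset.univ.image g₁ = S := by
      ext ℓ
      simp only [Finset.mem_image, Finset.mem_univ, true_and]
      constructor
      · rintro ⟨i, rfl⟩; exact (e.symm i).2
      · intro hℓ; exact ⟨e ⟨ℓ, hℓ⟩, by simp [hg₁]⟩
    have hWeq : W = CGM.Wset g₁ := by
      ext p
      simp only [CGM.Wset, Finset.mem_product, Finset.mem_univ, and_true, himg]
      constructor
      · intro hp
        have hpos : 0 < (W.filter fun q => q.1 = p.1).card :=
          Finset.card_pos.mpr ⟨p, Finset.mem_filter.mpr ⟨hp, rfl⟩⟩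
        rcases hW0 p.1 with h0 | h2
        · omega
        · rw [hSdef]
          exact Finset.mem_filter.mpr ⟨Finset.mem_univ p.1, h2⟩
      · intro hp
        have h2 : (W.filter fun q => q.1 = p.1).card = 2 := (Finset.mem_filter.mp hp).2
        have hsub : (W.filter fun q => q.1 = p.1) ⊆
            (({p.1} : Finset L) ×ˢ (Finset.univ : Finset Bool)) := by
          intro q hq
          simp only [Finset.mem_filter] at hq
          simp only [Finset.mem_product, Finset.mem_singleton, Finset.mem_univ, and_true]
          exact hq.2
        have hcard2 : ((({p.1} : Finset L)) ×ˢ (Finset.univ : Finset Bool)).card = 2 := by simp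
        have heq := Finset.eq_of_subset_of_card_le hsub (by rw [hcard2, h2])
        have hpmem : p ∈ (({p.1} : Finset L) ×ˢ (Finset.univ : Finset Bool)) :=
          Finset.mem_product.mpr ⟨Finset.mem_singleton_self p.1, Finset.mem_univ p.2⟩
        rw [← heq] at hpmem
        exact (Finset.mem_filter.mp hpmem).1
    refine ⟨g₁, hinj, ?_, ?_⟩
    · rw [← CGM.Wset_weight L₁ hinj, ← hWeq]
      exact hWk
    · rw [← CGM.li_iff_det Z hinj]
      rw [hWeq] at hWli
      exact hWli
  · rintro ⟨g₁, hinj, hw, hdet⟩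
    refine ⟨CGM.Wset g₁, ?_, CGM.Wset_card hinj, (CGM.li_iff_det Z hinj).mpr hdet, ?_⟩
    · intro ℓ
      rw [CGM.Wset_filter_card]
      by_cases h : ℓ ∈ Finset.univ.image g₁
      · right; rw [if_pos h]
      · left; rw [if_neg h]
    · rw [CGM.Wset_weight L₁ hinj]
      exact hw
end
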